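/- arXiv:1203.4724 — 4 statements merged into one kernel-verified Lean document; each statement's English description precedes it below -/
import Mathlib

section
/- Let p ≥ 1, θ ∈ ℝ^p, σ > 0, and let X be a random vector in ℝ^p with density x ↦ (2πσ²)^{-p/2} exp(-‖x-θ‖²/(2σ²)) with respect to Lebesgue measure. Let g : ℝ^p → ℝ^p be continuously differentiable and suppose that the functions x ↦ ‖g(x)‖, x ↦ (x-θ)·g(x) and x ↦ |∂g_i/∂x_i(x)| for each i are integrable with respect to this Gaussian density. Then E[(X-θ)·g(X)] = σ² E[div g(X)], where div g(x) = ∑_{i=1}^p ∂g_i/∂x_i(x). (Stein's lemma, Lemma 3.1.) -/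
open MeasureTheory Real
open scoped RealInnerProductSpace

/-- Divergence of a vector field on `EuclideanSpace ℝ (Fin p)`:
`div g x = ∑ i, ∂gᵢ/∂xᵢ (x)`. -/
noncomputable def vdiv {p : ℕ} (g : EuclideanSpace ℝ (Fin p) → EuclideanSpace ℝ (Fin p))
    (x : EuclideanSpace ℝ (Fin p)) : ℝ :=
  ∑ i, fderiv ℝ g x (EuclideanSpace.single i 1) i

/-- The density of the `N(θ, σ²I)` distribution on `EuclideanSpace ℝ (Fin p)` with respect to
Lebesgue measure. -/
noncomputable def gaussDensity {p : ℕ} (θ : EuclideanSpace ℝ (Fin p)) (σ : ℝ)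
    (x : EuclideanSpace ℝ (Fin p)) : ℝ :=
  (2 * π * σ ^ 2) ^ (-(p : ℝ) / 2) * Real.exp (-‖x - θ‖ ^ 2 / (2 * σ ^ 2))

section SteinAuxSection
open Set Filter intervalIntegral
open scoped Topology

namespace SteinAux


noncomputable def φ (σ t : ℝ) : ℝ := Real.exp (-t^2 / (2*σ^2))

lemma φ_pos (σ t : ℝ) : 0 < φ σ t := Real.exp_pos _

lemma φ_cont (σ : ℝ) : Continuous (φ σ) := by
  unfold φ; fun_prop

lemma φ_neg (σ t : ℝ) : φ σ (-t) = φ σ t := by simp [φ]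

lemma hasDerivAt_negφ {σ : ℝ} (hσ : 0 < σ) (t : ℝ) :
    HasDerivAt (fun t => -σ^2 * φ σ t) (t * φ σ t) t := by
  have h1 : HasDerivAt (fun t : ℝ => -t^2 / (2*σ^2)) (-t / σ^2) t := by
    have := ((hasDerivAt_pow 2 t).neg).div_const (2*σ^2)
    refine this.congr_deriv ?_
    field_simp
    ring
  have h2 : HasDerivAt (φ σ) ((-t / σ^2) * φ σ t) t := by
    have := h1.exp
    simp only [φ]
    refine this.congr_deriv ?_
    exact (mul_comm _ _)
  have h3 := h2.const_mul (-σ^2)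
  have hσ' : σ^2 ≠ 0 := by positivity
  refine h3.congr_deriv ?_
  field_simp


variable {σ : ℝ} {f f' : ℝ → ℝ}

lemma half (hσ : 0 < σ) (hf : ∀ t, HasDerivAt f (f' t) t) (hf' : Continuous f')
    (hint : IntegrableOn (fun s => f' s * φ σ s) (Ioi 0)) :
    IntegrableOn (fun t => t * (f t - f 0) * φ σ t) (Ioi 0) ∧
    (∫ t in Ioi 0, |t * (f t - f 0) * φ σ t|) ≤ σ^2 * ∫ s in Ioi 0, |f' s * φ σ s| ∧
    ∫ t in Ioi 0, t * (f t - f 0) * φ σ t = σ^2 * ∫ s in Ioi 0, f' s * φ σ s := by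
  have hfc : Continuous f := (Differentiable.continuous fun t => (hf t).differentiableAt)
  set A : ℝ := ∫ s in Ioi 0, |f' s * φ σ s| with hA
  have hintabs : IntegrableOn (fun s => |f' s * φ σ s|) (Ioi 0) := hint.abs
  -- M t = ∫_0^t |f'|
  set M : ℝ → ℝ := fun t => ∫ s in (0:ℝ)..t, |f' s| with hM
  have habs : Continuous fun s => |f' s| := hf'.abs
  have hMderiv : ∀ t, HasDerivAt M |f' t| t := fun t =>
    intervalIntegral.integral_hasDerivAt_right (habs.intervalIntegrable _ _)
      (habs.stronglyMeasurableAtFilter _ _) habs.continuousAt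
  have hMcont : Continuous M :=
    (Differentiable.continuous fun t => (hMderiv t).differentiableAt)
  have hMnonneg : ∀ t, 0 ≤ t → 0 ≤ M t := fun t ht =>
    intervalIntegral.integral_nonneg ht (fun s _ => abs_nonneg _)
  have hFTC : ∀ t, f t - f 0 = ∫ s in (0:ℝ)..t, f' s := fun t =>
    (intervalIntegral.integral_eq_sub_of_hasDerivAt (fun s _ => hf s)
      (hf'.intervalIntegrable _ _)).symm
  have hbnd : ∀ t, 0 ≤ t → |f t - f 0| ≤ M t := by
    intro t ht
    rw [hFTC t]
    exact intervalIntegral.abs_integral_le_integral_abs ht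
  have habsmul : ∀ s : ℝ, |f' s| * φ σ s = |f' s * φ σ s| := by
    intro s
    rw [abs_mul, abs_of_pos (φ_pos σ s)]
  have hptbnd : ∀ t, 0 ≤ t → |t * (f t - f 0) * φ σ t| ≤ t * φ σ t * M t := by
    intro t ht
    rw [abs_mul, abs_mul, abs_of_nonneg ht, abs_of_pos (φ_pos σ t)]
    have := mul_le_mul_of_nonneg_left (hbnd t ht) ht
    calc t * |f t - f 0| * φ σ t ≤ t * M t * φ σ t :=
          mul_le_mul_of_nonneg_right this (φ_pos σ t).le
      _ = t * φ σ t * M t := by ring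
  -- the antiderivative Φ of t * φ * M
  set Φ : ℝ → ℝ := fun t =>
    -σ^2 * φ σ t * M t + σ^2 * ∫ s in (0:ℝ)..t, |f' s| * φ σ s with hΦ
  have hcφM : Continuous fun s => |f' s| * φ σ s := habs.mul (φ_cont σ)
  have hΦderiv : ∀ t, HasDerivAt Φ (t * φ σ t * M t) t := by
    intro t
    have h1 := (hasDerivAt_negφ hσ t).mul (hMderiv t)
    have h2 : HasDerivAt (fun u => ∫ s in (0:ℝ)..u, |f' s| * φ σ s) (|f' t| * φ σ t) t :=
      intervalIntegral.integral_hasDerivAt_right (hcφM.intervalIntegrable _ _)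
        (hcφM.stronglyMeasurableAtFilter _ _) hcφM.continuousAt
    have := h1.add (h2.const_mul (σ^2))
    refine this.congr_deriv ?_
    ring
  have hΦ0 : Φ 0 = 0 := by simp [hΦ, hM]
  have hΦle : ∀ R, 0 ≤ R → Φ R ≤ σ^2 * A := by
    intro R hR
    have h1 : -σ^2 * φ σ R * M R ≤ 0 := by
      have := mul_nonneg (mul_nonneg (sq_nonneg σ) (φ_pos σ R).le) (hMnonneg R hR)
      nlinarith
    have h2 : (∫ s in (0:ℝ)..R, |f' s| * φ σ s) ≤ A := by
      rw [intervalIntegral.integral_of_le hR]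
      simp_rw [habsmul]
      refine setIntegral_mono_set hintabs ?_ ?_
      · exact Eventually.of_forall fun s => abs_nonneg _
      · exact HasSubset.Subset.eventuallyLE Ioc_subset_Ioi_self
    simp only [hΦ]
    nlinarith [h2, h1, sq_nonneg σ]
  have hcont_integrand : Continuous fun t => t * (f t - f 0) * φ σ t :=
    (continuous_id.mul (hfc.sub continuous_const)).mul (φ_cont σ)
  have hcontφM : Continuous fun t => t * φ σ t * M t :=
    (continuous_id.mul (φ_cont σ)).mul hMcont
  have hIoc : ∀ R : ℝ, IntegrableOn (fun t => t * (f t - f 0) * φ σ t) (Ioc 0 R) :=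
    fun R => hcont_integrand.integrableOn_Ioc
  have hkey : ∀ R, 0 ≤ R → (∫ t in (0:ℝ)..R, ‖t * (f t - f 0) * φ σ t‖) ≤ σ^2 * A := by
    intro R hR
    have step1 : (∫ t in (0:ℝ)..R, ‖t * (f t - f 0) * φ σ t‖)
        ≤ ∫ t in (0:ℝ)..R, t * φ σ t * M t := by
      refine intervalIntegral.integral_mono_on hR
        (hcont_integrand.norm.intervalIntegrable _ _)
        (hcontφM.intervalIntegrable _ _) ?_
      intro x hx
      rw [Real.norm_eq_abs]
      exact hptbnd x hx.1
    have step2 : (∫ t in (0:ℝ)..R, t * φ σ t * M t) = Φ R - Φ 0 :=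
      intervalIntegral.integral_eq_sub_of_hasDerivAt (fun t _ => hΦderiv t)
        (hcontφM.intervalIntegrable _ _)
    rw [step2, hΦ0, sub_zero] at step1
    exact step1.trans (hΦle R hR)
  have hIntOn : IntegrableOn (fun t => t * (f t - f 0) * φ σ t) (Ioi 0) := by
    refine integrableOn_Ioi_of_intervalIntegral_norm_bounded (σ^2 * A) 0 hIoc tendsto_id ?_
    filter_upwards [eventually_ge_atTop (0:ℝ)] with R hR
    exact hkey R hR
  refine ⟨hIntOn, ?_, ?_⟩
  · have htend : Tendsto (fun R => ∫ t in (0:ℝ)..R, |t * (f t - f 0) * φ σ t|) atTop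
        (𝓝 (∫ t in Ioi (0:ℝ), |t * (f t - f 0) * φ σ t|)) := by
      have := intervalIntegral_tendsto_integral_Ioi 0 hIntOn.abs tendsto_id
      simpa using this
    refine le_of_tendsto htend ?_
    filter_upwards [eventually_ge_atTop (0:ℝ)] with R hR
    have := hkey R hR
    simp only [Real.norm_eq_abs] at this
    exact this
  · -- the exact identity
    set Ψ : ℝ → ℝ := fun t =>
      -σ^2 * φ σ t * (f t - f 0) + σ^2 * ∫ s in (0:ℝ)..t, f' s * φ σ s with hΨ
    have hcf'φ : Continuous fun s => f' s * φ σ s := hf'.mul (φ_cont σ)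
    have hΨderiv : ∀ t, HasDerivAt Ψ (t * (f t - f 0) * φ σ t) t := by
      intro t
      have h1 := (hasDerivAt_negφ hσ t).mul ((hf t).sub_const (f 0))
      have h2 : HasDerivAt (fun u => ∫ s in (0:ℝ)..u, f' s * φ σ s) (f' t * φ σ t) t :=
        intervalIntegral.integral_hasDerivAt_right (hcf'φ.intervalIntegrable _ _)
          (hcf'φ.stronglyMeasurableAtFilter _ _) hcf'φ.continuousAt
      have := h1.add (h2.const_mul (σ^2))
      refine this.congr_deriv ?_
      ring
    have hΨ0 : Ψ 0 = 0 := by simp [hΨ]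
    have hFTCΨ : ∀ R, (∫ t in (0:ℝ)..R, t * (f t - f 0) * φ σ t) = Ψ R := by
      intro R
      rw [intervalIntegral.integral_eq_sub_of_hasDerivAt (fun t _ => hΨderiv t)
        (hcont_integrand.intervalIntegrable _ _), hΨ0, sub_zero]
    have T1 : Tendsto (fun R => ∫ t in (0:ℝ)..R, t * (f t - f 0) * φ σ t) atTop
        (𝓝 (∫ t in Ioi (0:ℝ), t * (f t - f 0) * φ σ t)) := by
      simpa using intervalIntegral_tendsto_integral_Ioi 0 hIntOn tendsto_id
    have T2 : Tendsto (fun R => σ^2 * ∫ s in (0:ℝ)..R, f' s * φ σ s) atTop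
        (𝓝 (σ^2 * ∫ s in Ioi (0:ℝ), f' s * φ σ s)) := by
      have := intervalIntegral_tendsto_integral_Ioi 0 hint tendsto_id
      simpa using this.const_mul (σ^2)
    set L := ∫ t in Ioi (0:ℝ), t * (f t - f 0) * φ σ t with hL
    set B := ∫ s in Ioi (0:ℝ), f' s * φ σ s with hB
    have T3 : Tendsto (fun R => -σ^2 * φ σ R * (f R - f 0)) atTop (𝓝 (L - σ^2 * B)) := by
      have h := T1.sub T2
      refine h.congr fun R => ?_
      rw [hFTCΨ R]
      simp only [hΨ]
      ring
    have hzero : L - σ^2 * B = 0 := by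
      by_contra hne
      set ℓ := L - σ^2 * B with hℓ
      have Tabs : Tendsto (fun R => |(-σ^2 * φ σ R * (f R - f 0))|) atTop (𝓝 |ℓ|) := T3.abs
      have hpos : 0 < |ℓ| := abs_pos.mpr hne
      have hev : ∀ᶠ R in atTop, |ℓ|/2 ≤ |(-σ^2 * φ σ R * (f R - f 0))| :=
        Tabs.eventually (eventually_ge_nhds (by linarith : |ℓ|/2 < |ℓ|))
      obtain ⟨R₀, hR₀⟩ := eventually_atTop.mp (hev.and (eventually_ge_atTop (1:ℝ)))
      set c := |ℓ|/(2*σ^2) with hc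
      have hcpos : 0 < c := by positivity
      have hlow : ∀ t, t ∈ Ioi (max R₀ 1) → c ≤ |t * (f t - f 0) * φ σ t| := by
        intro t ht
        simp only [mem_Ioi] at ht
        have ht1 : (1:ℝ) ≤ t := le_trans (le_max_right _ _) ht.le
        have htR : R₀ ≤ t := le_trans (le_max_left _ _) ht.le
        obtain ⟨h1, _⟩ := hR₀ t htR
        have hexp : |(-σ^2 * φ σ t * (f t - f 0))| = σ^2 * (φ σ t * |f t - f 0|) := by
          rw [abs_mul, abs_mul]
          rw [abs_of_pos (φ_pos σ t), abs_neg, abs_of_pos (by positivity : (0:ℝ) < σ^2)]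
          ring
        rw [hexp] at h1
        have : |t * (f t - f 0) * φ σ t| = t * (φ σ t * |f t - f 0|) := by
          rw [abs_mul, abs_mul, abs_of_pos (φ_pos σ t),
            abs_of_nonneg (by linarith : (0:ℝ) ≤ t)]
          ring
        rw [this]
        have h2 : |ℓ|/(2*σ^2) ≤ φ σ t * |f t - f 0| := by
          rw [div_le_iff₀ (by positivity : (0:ℝ) < 2*σ^2)] at *
          nlinarith [h1]
        calc c = |ℓ|/(2*σ^2) := rfl
          _ ≤ φ σ t * |f t - f 0| := h2
          _ ≤ t * (φ σ t * |f t - f 0|) := by nlinarith [abs_nonneg (f t - f 0), (φ_pos σ t).le]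
      have hIntSub : IntegrableOn (fun t => t * (f t - f 0) * φ σ t) (Ioi (max R₀ 1)) :=
        hIntOn.mono_set (Ioi_subset_Ioi (le_trans (by norm_num) (le_max_right R₀ 1)))
      have hconst : IntegrableOn (fun _ : ℝ => c) (Ioi (max R₀ 1)) := by
        refine Integrable.mono' hIntSub.abs ?_ ?_
        · exact aestronglyMeasurable_const
        · refine (ae_restrict_iff' measurableSet_Ioi).2 (ae_of_all _ fun t ht => ?_)
          simpa [Real.norm_eq_abs, abs_of_pos hcpos] using hlow t ht
      rw [integrableOn_const_iff (C := c)] at hconst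
      rcases hconst with h | h
      · exact absurd h (by simpa using hcpos.ne')
      · rw [Real.volume_Ioi] at h
        exact absurd h (by simp)
    exact sub_eq_zero.mp hzero

lemma oneDim (hσ : 0 < σ) (hf : ∀ t, HasDerivAt f (f' t) t) (hf' : Continuous f')
    (hint : Integrable (fun s => f' s * φ σ s)) :
    Integrable (fun t => t * (f t - f 0) * φ σ t) ∧
    (∫ t, |t * (f t - f 0) * φ σ t|) ≤ σ^2 * ∫ s, |f' s * φ σ s| ∧
    ∫ t, t * (f t - f 0) * φ σ t = σ^2 * ∫ s, f' s * φ σ s := by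
  set u : ℝ → ℝ := fun t => t * (f t - f 0) * φ σ t with hu
  set v : ℝ → ℝ := fun s => f' s * φ σ s with hv
  obtain ⟨hI₁, hA₁, hE₁⟩ := half hσ hf hf' hint.integrableOn
  -- reflected function
  set F : ℝ → ℝ := fun t => f (-t) with hF
  set F' : ℝ → ℝ := fun t => f' (-t) * (-1) with hF'
  have hFd : ∀ t, HasDerivAt F (F' t) t := fun t => (hf (-t)).comp t (hasDerivAt_neg t)
  have hF'c : Continuous F' := (hf'.comp continuous_neg).mul continuous_const
  have hFint : Integrable (fun s => F' s * φ σ s) := by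
    have h1 : (fun s => F' s * φ σ s) = fun s => -(v (-s)) := by
      funext s; simp only [hF', hv, φ_neg]; ring
    rw [h1]
    exact (hint.comp_neg).neg
  obtain ⟨hI₂, hA₂, hE₂⟩ := half hσ hFd hF'c hFint.integrableOn
  have hF0 : F 0 = f 0 := by simp [hF]
  have huF : (fun t => t * (F t - F 0) * φ σ t) = fun t => -(u (-t)) := by
    funext t; simp only [hF, hF0, hu, φ_neg]; ring
  have hvF : (fun s => F' s * φ σ s) = fun s => -(v (-s)) := by
    funext s; simp only [hF', hv, φ_neg]; ring
  -- transfer integrability to Iio 0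
  have hnegIio : Ioi (0:ℝ) = Neg.neg ⁻¹' (Iio 0) := by ext x; simp
  have hIio_of : ∀ w : ℝ → ℝ, IntegrableOn (fun t => w (-t)) (Ioi 0) → IntegrableOn w (Iio 0) := by
    intro w hw
    have hmp : MeasurePreserving (Neg.neg : ℝ → ℝ) volume volume :=
      Measure.measurePreserving_neg volume
    have hme : MeasurableEmbedding (Neg.neg : ℝ → ℝ) :=
      (Homeomorph.neg ℝ).measurableEmbedding
    refine (hmp.integrableOn_comp_preimage hme (f := w) (s := Iio (0:ℝ))).mp ?_
    rw [← hnegIio]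
    exact hw
  have hIu2 : IntegrableOn u (Iio 0) := by
    refine hIio_of u ?_
    have : (fun t => u (-t)) = fun t => -(t * (F t - F 0) * φ σ t) := by
      funext t; simp only [hu, hF, hF0, φ_neg]; ring
    rw [this]
    exact hI₂.neg
  -- transfer the integral values
  have hval : ∀ w : ℝ → ℝ, (∫ t in Ioi (0:ℝ), w (-t)) = ∫ t in Iio (0:ℝ), w t := by
    intro w
    rw [integral_comp_neg_Ioi, neg_zero]
    exact (setIntegral_congr_set Iio_ae_eq_Iic).symm
  have hE₂' : ∫ t in Iio (0:ℝ), u t = σ^2 * ∫ s in Iio (0:ℝ), v s := by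
    have e1 : (∫ t in Ioi (0:ℝ), t * (F t - F 0) * φ σ t) = -∫ t in Iio (0:ℝ), u t := by
      rw [huF, MeasureTheory.integral_neg, hval u]
    have e2 : (∫ s in Ioi (0:ℝ), F' s * φ σ s) = -∫ s in Iio (0:ℝ), v s := by
      rw [hvF, MeasureTheory.integral_neg, hval v]
    rw [e1, e2] at hE₂
    linarith
  have hA₂' : (∫ t in Iio (0:ℝ), |u t|) ≤ σ^2 * ∫ s in Iio (0:ℝ), |v s| := by
    have e1 : (∫ t in Ioi (0:ℝ), |t * (F t - F 0) * φ σ t|) = ∫ t in Iio (0:ℝ), |u t| := by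
      have h : (fun t => |t * (F t - F 0) * φ σ t|) = fun t => |u (-t)| := by
        funext t; rw [congrFun huF t, abs_neg]
      rw [h, hval fun t => |u t|]
    have e2 : (∫ s in Ioi (0:ℝ), |F' s * φ σ s|) = ∫ s in Iio (0:ℝ), |v s| := by
      have h : (fun s => |F' s * φ σ s|) = fun s => |v (-s)| := by
        funext s; rw [congrFun hvF s, abs_neg]
      rw [h, hval fun s => |v s|]
    rw [e1, e2] at hA₂
    exact hA₂
  -- assemble
  have hIic : IntegrableOn u (Iic 0) := by
    rw [integrableOn_Iic_iff_integrableOn_Iio]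
    exact hIu2
  have hIu : Integrable u := by
    have h := hIic.union hI₁
    rw [Iic_union_Ioi] at h
    rwa [integrableOn_univ] at h
  have hvIio : IntegrableOn v (Iio 0) := hint.integrableOn
  have hvIic : IntegrableOn v (Iic 0) := hint.integrableOn
  have hIiceq : ∀ w : ℝ → ℝ, (∫ t in Iic (0:ℝ), w t) = ∫ t in Iio (0:ℝ), w t := fun w =>
    (setIntegral_congr_set Iio_ae_eq_Iic).symm
  refine ⟨hIu, ?_, ?_⟩
  · have hsplitu : (∫ t, |u t|) = (∫ t in Iic (0:ℝ), |u t|) + ∫ t in Ioi (0:ℝ), |u t| :=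
      (intervalIntegral.integral_Iic_add_Ioi hIic.abs hI₁.abs).symm
    have hsplitv : (∫ s, |v s|) = (∫ s in Iic (0:ℝ), |v s|) + ∫ s in Ioi (0:ℝ), |v s| :=
      (intervalIntegral.integral_Iic_add_Ioi hvIic.abs hint.integrableOn.abs).symm
    rw [hsplitu, hsplitv, hIiceq fun t => |u t|, hIiceq fun s => |v s|]
    calc (∫ t in Iio (0:ℝ), |u t|) + ∫ t in Ioi (0:ℝ), |u t|
        ≤ (σ^2 * ∫ s in Iio (0:ℝ), |v s|) + σ^2 * ∫ s in Ioi (0:ℝ), |v s| :=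
          add_le_add hA₂' hA₁
      _ = σ^2 * ((∫ s in Iio (0:ℝ), |v s|) + ∫ s in Ioi (0:ℝ), |v s|) := by ring
  · have hsplitu : (∫ t, u t) = (∫ t in Iic (0:ℝ), u t) + ∫ t in Ioi (0:ℝ), u t :=
      (intervalIntegral.integral_Iic_add_Ioi hIic hI₁).symm
    have hsplitv : (∫ s, v s) = (∫ s in Iic (0:ℝ), v s) + ∫ s in Ioi (0:ℝ), v s :=
      (intervalIntegral.integral_Iic_add_Ioi hvIic hint.integrableOn).symm
    rw [hsplitu, hsplitv, hIiceq u, hIiceq v, hE₁, hE₂']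
    ring


-- coordinate bound for Euclidean space
lemma normsq_eq {m : ℕ} (x : EuclideanSpace ℝ (Fin m)) : ‖x‖^2 = ∑ j, (x j)^2 := by
  rw [EuclideanSpace.norm_eq, sq_sqrt (by positivity)]
  simp [Real.norm_eq_abs, sq_abs]

lemma abs_coord_le_norm {m : ℕ} (x : EuclideanSpace ℝ (Fin m)) (i : Fin m) : |x i| ≤ ‖x‖ := by
  have h1 : (x i)^2 ≤ ‖x‖^2 := by
    rw [normsq_eq]
    exact Finset.single_le_sum (f := fun j => (x j)^2) (fun j _ => sq_nonneg _)
      (Finset.mem_univ i)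
  calc |x i| = Real.sqrt ((x i)^2) := (Real.sqrt_sq_eq_abs _).symm
    _ ≤ Real.sqrt (‖x‖^2) := Real.sqrt_le_sqrt h1
    _ = ‖x‖ := Real.sqrt_sq (norm_nonneg x)

end SteinAux

end SteinAuxSection

set_option maxHeartbeats 2000000

/-- **Stein's lemma** (Lemma 3.1): if `X ~ N(θ, σ²I)` and `g` is continuously differentiable
with the relevant integrability conditions, then
`E[(X - θ) ⬝ g(X)] = σ² E[div g (X)]`. -/
theorem stein_lemma (p : ℕ) (hp : 1 ≤ p) (θ : EuclideanSpace ℝ (Fin p)) (σ : ℝ) (hσ : 0 < σ)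
    (g : EuclideanSpace ℝ (Fin p) → EuclideanSpace ℝ (Fin p)) (hg : ContDiff ℝ 1 g)
    (hint1 : Integrable (fun x => ‖g x‖ * gaussDensity θ σ x))
    (hint2 : Integrable (fun x => ⟪x - θ, g x⟫ * gaussDensity θ σ x))
    (hint3 : ∀ i : Fin p, Integrable
      (fun x => |fderiv ℝ g x (EuclideanSpace.single i 1) i| * gaussDensity θ σ x)) :
    ∫ x, ⟪x - θ, g x⟫ * gaussDensity θ σ x =
      σ ^ 2 * ∫ x, vdiv g x * gaussDensity θ σ x := by
  obtain ⟨n, rfl⟩ : ∃ n, p = n + 1 := ⟨p - 1, by omega⟩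
  clear hp
  set γ : EuclideanSpace ℝ (Fin (n+1)) → ℝ := gaussDensity θ σ with hγ
  have hγpos : ∀ x, 0 < γ x := by
    intro x
    have h2 : (0:ℝ) < 2 * π * σ^2 := by positivity
    exact mul_pos (Real.rpow_pos_of_pos h2 _) (Real.exp_pos _)
  have hγcont : Continuous γ := by
    refine continuous_const.mul (Real.continuous_exp.comp ?_)
    exact ((((continuous_id.sub continuous_const).norm.pow 2).neg).div_const _)
  have hgc : Continuous g := hg.continuous
  have hgd : Differentiable ℝ g := hg.differentiable one_ne_zero
  have hfdc : Continuous (fderiv ℝ g) := hg.continuous_fderiv one_ne_zero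
  set D : Fin (n+1) → EuclideanSpace ℝ (Fin (n+1)) → ℝ :=
    fun i x => fderiv ℝ g x (EuclideanSpace.single i 1) i with hD
  have hDcont : ∀ i, Continuous (D i) := by
    intro i
    have h1 : Continuous fun x => (fderiv ℝ g x) (EuclideanSpace.single i 1) :=
      ((ContinuousLinearMap.apply ℝ _ (EuclideanSpace.single i 1)).continuous).comp hfdc
    exact (EuclideanSpace.proj i).continuous.comp h1
  have hDint : ∀ i, Integrable (fun x => D i x * γ x) := by
    intro i
    refine Integrable.mono' (hint3 i) (((hDcont i).mul hγcont).aestronglyMeasurable)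
      (Filter.Eventually.of_forall fun x => ?_)
    rw [Real.norm_eq_abs, abs_mul, abs_of_pos (hγpos x)]
  have key : ∀ i : Fin (n+1),
      Integrable (fun x => (x i - θ i) * g x i * γ x) ∧
      ∫ x, (x i - θ i) * g x i * γ x = σ^2 * ∫ x, D i x * γ x := by
    intro i
    set c := θ i with hc
    set u : EuclideanSpace ℝ (Fin (n+1)) := EuclideanSpace.single i 1 with hu
    set eqv : (ℝ × (Fin n → ℝ)) ≃ᵐ EuclideanSpace ℝ (Fin (n+1)) :=
      ((MeasurableEquiv.piFinSuccAbove (fun _ : Fin (n+1) => ℝ) i).symm.trans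
        (MeasurableEquiv.toLp 2 (Fin (n+1) → ℝ))) with heqv
    have hSapp : ∀ (t : ℝ) (y : Fin n → ℝ) (k : Fin (n+1)),
        (eqv (t, y)) k = Fin.insertNth (α := fun _ => ℝ) i t y k := fun t y k => rfl
    have hS : MeasurePreserving (⇑eqv) (volume : Measure (ℝ × (Fin n → ℝ))) volume := by
      have h1 := (MeasureTheory.volume_preserving_piFinSuccAbove (fun _ : Fin (n+1) => ℝ) i).symm
      have h2 := (EuclideanSpace.volume_preserving_symm_measurableEquiv_toLp (Fin (n+1))).symm
      have h3 := h2.comp h1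
      simpa [heqv, MeasurableEquiv.coe_trans] using h3
    have hSprod : MeasurePreserving (⇑eqv) ((volume : Measure ℝ).prod volume) volume := by
      rw [← MeasureTheory.Measure.volume_eq_prod]; exact hS
    have hemb : MeasurableEmbedding (⇑eqv) := eqv.measurableEmbedding
    have htransInt : ∀ G : EuclideanSpace ℝ (Fin (n+1)) → ℝ,
        Integrable G volume ↔
          Integrable (fun z => G (eqv z)) ((volume : Measure ℝ).prod volume) := by
      intro G
      rw [← hSprod.integrable_comp_emb hemb]
      exact Iff.rfl
    have htransVal : ∀ G : EuclideanSpace ℝ (Fin (n+1)) → ℝ,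
        ∫ z, G (eqv z) ∂((volume : Measure ℝ).prod volume) = ∫ x, G x :=
      fun G => hSprod.integral_comp hemb G
    have heqvcont : Continuous (fun z : ℝ × (Fin n → ℝ) => eqv z) := by
      have h1 : Continuous (fun z : ℝ × (Fin n → ℝ) => (i.insertNth z.1 z.2 : Fin (n+1) → ℝ)) := by
        refine continuous_pi fun k => ?_
        refine i.succAboveCases ?_ ?_ k
        · simpa [Fin.insertNth_apply_same] using (continuous_fst : Continuous
            (fun z : ℝ × (Fin n → ℝ) => z.1))
        · intro j
          simpa [Fin.insertNth_apply_succAbove, Function.comp_def] using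
            ((continuous_apply j).comp (continuous_snd : Continuous
              (fun z : ℝ × (Fin n → ℝ) => z.2)))
      exact ((PiLp.continuousLinearEquiv 2 ℝ (fun _ : Fin (n+1) => ℝ)).symm.continuous).comp h1
    -- the factorization of the Gaussian density
    set K : ℝ := (2 * π * σ^2) ^ (-((n+1 : ℕ) : ℝ) / 2) with hK
    set ψ : (Fin n → ℝ) → ℝ := fun y =>
      K * Real.exp (-(∑ j, (y j - θ (i.succAbove j))^2) / (2*σ^2)) with hψ
    have hψpos : ∀ y, 0 < ψ y := fun y =>
      mul_pos (Real.rpow_pos_of_pos (by positivity) _) (Real.exp_pos _)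
    have hψcont : Continuous ψ := by
      refine continuous_const.mul (Real.continuous_exp.comp ?_)
      refine Continuous.div_const (Continuous.neg ?_) _
      exact continuous_finset_sum _ fun j _ =>
        ((continuous_apply j).sub continuous_const).pow 2
    have hfac : ∀ z : ℝ × (Fin n → ℝ), γ (eqv z) = SteinAux.φ σ (z.1 - c) * ψ z.2 := by
      rintro ⟨t, y⟩
      have hnormsq : ‖eqv (t, y) - θ‖^2
          = (t - c)^2 + ∑ j, (y j - θ (i.succAbove j))^2 := by
        rw [SteinAux.normsq_eq]
        rw [Fin.sum_univ_succAbove (fun k => ((eqv (t,y) - θ) k)^2) i]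
        congr 1
        · rw [PiLp.sub_apply, hSapp, Fin.insertNth_apply_same]
        · refine Finset.sum_congr rfl fun j _ => ?_
          rw [PiLp.sub_apply, hSapp, Fin.insertNth_apply_succAbove]
      show K * Real.exp (-‖eqv (t,y) - θ‖^2/(2*σ^2)) = _
      rw [hnormsq, SteinAux.φ]
      have hsplit : -((t - c)^2 + ∑ j, (y j - θ (i.succAbove j))^2)/(2*σ^2)
          = -(t-c)^2/(2*σ^2) + -(∑ j, (y j - θ (i.succAbove j))^2)/(2*σ^2) := by ring
      rw [hsplit, Real.exp_add]
      ring
    -- product forms of the integrable hypotheses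
    have hWg : Integrable (fun z : ℝ × (Fin n → ℝ) =>
        ‖g (eqv z)‖ * (SteinAux.φ σ (z.1 - c) * ψ z.2)) ((volume : Measure ℝ).prod volume) := by
      have h := (htransInt (fun x => ‖g x‖ * γ x)).1 hint1
      refine h.congr (Filter.Eventually.of_forall fun z => ?_)
      simp only [hfac]
    have hWa : Integrable (fun z : ℝ × (Fin n → ℝ) =>
        |D i (eqv z)| * (SteinAux.φ σ (z.1 - c) * ψ z.2)) ((volume : Measure ℝ).prod volume) := by
      have h := (htransInt (fun x => |D i x| * γ x)).1 (hint3 i)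
      refine h.congr (Filter.Eventually.of_forall fun z => ?_)
      simp only [hfac]
    have hWd : Integrable (fun z : ℝ × (Fin n → ℝ) =>
        D i (eqv z) * (SteinAux.φ σ (z.1 - c) * ψ z.2)) ((volume : Measure ℝ).prod volume) := by
      have h := (htransInt (fun x => D i x * γ x)).1 (hDint i)
      refine h.congr (Filter.Eventually.of_forall fun z => ?_)
      simp only [hfac]
    -- the affine structure of sections
    have haff : ∀ (t : ℝ) (y : Fin n → ℝ), eqv (t, y) = eqv (c, y) + (t - c) • u := by
      intro t y
      refine PiLp.ext fun k => ?_
      have hrhs : (eqv (c, y) + (t - c) • u) k = (eqv (c, y)) k + (t - c) * u k := rfl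
      rw [hrhs, hSapp, hSapp]
      refine i.succAboveCases ?_ ?_ k
      · rw [Fin.insertNth_apply_same, Fin.insertNth_apply_same, hu,
          EuclideanSpace.single_apply, if_pos rfl]
        ring
      · intro j
        rw [Fin.insertNth_apply_succAbove, Fin.insertNth_apply_succAbove, hu,
          EuclideanSpace.single_apply, if_neg (Fin.succAbove_ne i j)]
        ring
    have hsecderiv : ∀ (y : Fin n → ℝ) (t : ℝ),
        HasDerivAt (fun t => g (eqv (t, y)) i) (D i (eqv (t, y))) t := by
      intro y t
      have h0 : HasDerivAt (fun t : ℝ => eqv (c, y) + (t - c) • u) ((1:ℝ) • u) t :=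
        HasDerivAt.const_add _ (((hasDerivAt_id t).sub_const c).smul_const u)
      have h1 : HasDerivAt (fun t => eqv (t, y)) u t := by
        have hfeq : (fun t : ℝ => eqv (t, y)) = fun t => eqv (c, y) + (t - c) • u :=
          funext fun t => haff t y
        rw [hfeq]
        simpa using h0
      have h2 : HasDerivAt (fun t => g (eqv (t, y))) (fderiv ℝ g (eqv (t,y)) u) t :=
        (hgd _).hasFDerivAt.comp_hasDerivAt _ h1
      have h3 := (EuclideanSpace.proj (𝕜 := ℝ) i).hasFDerivAt.comp_hasDerivAt _ h2
      simpa [hD, hu, Function.comp_def] using h3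
    have hseccont : ∀ y : Fin n → ℝ, Continuous fun t : ℝ => eqv (t, y) :=
      fun y => heqvcont.comp (continuous_id.prodMk continuous_const)
    -- shifted section functions
    set fy : (Fin n → ℝ) → ℝ → ℝ := fun y s => g (eqv (s + c, y)) i with hfy
    set fy' : (Fin n → ℝ) → ℝ → ℝ := fun y s => D i (eqv (s + c, y)) with hfy'
    have hfyderiv : ∀ (y : Fin n → ℝ) (s : ℝ), HasDerivAt (fy y) (fy' y s) s := by
      intro y s
      have h4 := (hsecderiv y (s + c)).comp s ((hasDerivAt_id s).add_const c)
      simpa [hfy, hfy', Function.comp_def] using h4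
    have hfy'cont : ∀ y, Continuous (fy' y) := by
      intro y
      exact ((hDcont i).comp (hseccont y)).comp (continuous_id.add continuous_const)
    -- section integrability implies the 1d hypothesis
    have hsec_int : ∀ y : Fin n → ℝ,
        Integrable (fun t => |D i (eqv (t, y))| * (SteinAux.φ σ (t - c) * ψ y)) volume →
        Integrable (fun s => fy' y s * SteinAux.φ σ s) volume := by
      intro y hy
      have h1 := hy.mul_const ((ψ y)⁻¹)
      have h2 : (fun t => |D i (eqv (t, y))| * (SteinAux.φ σ (t - c) * ψ y) * (ψ y)⁻¹)
          = fun t => |D i (eqv (t, y))| * SteinAux.φ σ (t - c) := by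
        funext t
        rw [← mul_assoc, mul_inv_cancel_right₀ (hψpos y).ne']
      rw [h2] at h1
      have h3 := h1.comp_add_right c
      have h4 : (fun s => |D i (eqv (s + c, y))| * SteinAux.φ σ (s + c - c))
          = fun s => |fy' y s| * SteinAux.φ σ s := by
        funext s
        rw [add_sub_cancel_right]
      rw [h4] at h3
      refine Integrable.mono' h3 ?_ (Filter.Eventually.of_forall fun s => ?_)
      · exact ((hfy'cont y).mul (SteinAux.φ_cont σ)).aestronglyMeasurable
      · rw [Real.norm_eq_abs, abs_mul, abs_of_pos (SteinAux.φ_pos σ s)]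
    -- the 1d lemma for good sections
    have h1d : ∀ y : Fin n → ℝ, Integrable (fun s => fy' y s * SteinAux.φ σ s) volume →
        (Integrable (fun t => (t - c) * (g (eqv (t,y)) i - g (eqv (c,y)) i)
            * SteinAux.φ σ (t - c)) volume ∧
         (∫ t, |(t - c) * (g (eqv (t,y)) i - g (eqv (c,y)) i) * SteinAux.φ σ (t - c)|)
            ≤ σ^2 * ∫ s, |fy' y s * SteinAux.φ σ s| ∧
         ∫ t, (t - c) * (g (eqv (t,y)) i - g (eqv (c,y)) i) * SteinAux.φ σ (t - c)
            = σ^2 * ∫ s, fy' y s * SteinAux.φ σ s) := by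
      intro y hyint
      obtain ⟨hI, hA, hE⟩ := SteinAux.oneDim hσ (hfyderiv y) (hfy'cont y) hyint
      have hfy0 : fy y 0 = g (eqv (c, y)) i := by
        simp only [hfy, zero_add]
      have hcomp : (fun t => (t - c) * (g (eqv (t,y)) i - g (eqv (c,y)) i)
          * SteinAux.φ σ (t - c))
          = fun t => (fun s => s * (fy y s - fy y 0) * SteinAux.φ σ s) (t - c) := by
        funext t
        simp only [hfy0, hfy, sub_add_cancel, zero_add]
      have hcompabs : (fun t => |(t - c) * (g (eqv (t,y)) i - g (eqv (c,y)) i)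
          * SteinAux.φ σ (t - c)|)
          = fun t => (fun s => |s * (fy y s - fy y 0) * SteinAux.φ σ s|) (t - c) := by
        funext t
        simp only [hfy0, hfy, sub_add_cancel, zero_add]
      refine ⟨?_, ?_, ?_⟩
      · rw [hcomp]; exact hI.comp_sub_right c
      · rw [hcompabs, integral_sub_right_eq_self
          (fun s => |s * (fy y s - fy y 0) * SteinAux.φ σ s|) c]
        exact hA
      · rw [hcomp, integral_sub_right_eq_self
          (fun s => s * (fy y s - fy y 0) * SteinAux.φ σ s) c, hE]
    -- the "mid" integrand on the product space
    set Wm : ℝ × (Fin n → ℝ) → ℝ := fun z =>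
      ((z.1 - c) * (g (eqv z) i - g (eqv (c, z.2)) i) * SteinAux.φ σ (z.1 - c)) * ψ z.2
      with hWm
    set Wd2 : ℝ × (Fin n → ℝ) → ℝ := fun z =>
      D i (eqv z) * (SteinAux.φ σ (z.1 - c) * ψ z.2) with hWd2
    have hWmcont : Continuous Wm := by
      have hgi : Continuous fun z : ℝ × (Fin n → ℝ) => g (eqv z) i :=
        (EuclideanSpace.proj (𝕜 := ℝ) i).continuous.comp (hgc.comp heqvcont)
      have hgi0 : Continuous fun z : ℝ × (Fin n → ℝ) => g (eqv (c, z.2)) i :=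
        (EuclideanSpace.proj (𝕜 := ℝ) i).continuous.comp (hgc.comp
          (heqvcont.comp (continuous_const.prodMk continuous_snd)))
      exact (((continuous_fst.sub continuous_const).mul (hgi.sub hgi0)).mul
        ((SteinAux.φ_cont σ).comp (continuous_fst.sub continuous_const))).mul
        (hψcont.comp continuous_snd)
    -- relation between integrals of sections: shift identity
    have hshift_abs : ∀ y, (σ^2 * ∫ s, |fy' y s * SteinAux.φ σ s|) * ψ y
        = σ^2 * ∫ t, |D i (eqv (t, y))| * (SteinAux.φ σ (t - c) * ψ y) := by
      intro y
      rw [mul_assoc, ← integral_mul_const]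
      congr 1
      rw [← integral_add_right_eq_self
        (fun t => |D i (eqv (t, y))| * (SteinAux.φ σ (t - c) * ψ y)) c]
      congr 1
      funext s
      rw [add_sub_cancel_right, abs_mul, abs_of_pos (SteinAux.φ_pos σ s)]
      rw [mul_assoc]
    have hshift_val : ∀ y, (σ^2 * ∫ s, fy' y s * SteinAux.φ σ s) * ψ y
        = σ^2 * ∫ t, D i (eqv (t, y)) * (SteinAux.φ σ (t - c) * ψ y) := by
      intro y
      rw [mul_assoc, ← integral_mul_const]
      congr 1
      rw [← integral_add_right_eq_self
        (fun t => D i (eqv (t, y)) * (SteinAux.φ σ (t - c) * ψ y)) c]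
      congr 1
      funext s
      rw [add_sub_cancel_right, mul_assoc]
    -- a.e. good sections
    have hgood : ∀ᵐ y : Fin n → ℝ, Integrable (fun s => fy' y s * SteinAux.φ σ s) volume := by
      filter_upwards [hWa.prod_left_ae] with y hy
      exact hsec_int y hy
    -- integrability of Wm on the product space
    have hWmint : Integrable Wm ((volume : Measure ℝ).prod volume) := by
      refine (integrable_prod_iff' hWmcont.aestronglyMeasurable).2 ⟨?_, ?_⟩
      · filter_upwards [hgood] with y hy
        have := ((h1d y hy).1).mul_const (ψ y)
        exact this
      · refine Integrable.mono' ((hWd.integral_norm_prod_right).const_mul (σ^2)) ?_ ?_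
        · exact ((hWmcont.norm.stronglyMeasurable).integral_prod_left').aestronglyMeasurable
        · filter_upwards [hgood] with y hy
          obtain ⟨hI, hA, _⟩ := h1d y hy
          have h1 : (∫ t, ‖Wm (t, y)‖)
              = (∫ t, |(t - c) * (g (eqv (t,y)) i - g (eqv (c,y)) i)
                  * SteinAux.φ σ (t - c)|) * ψ y := by
            rw [← integral_mul_const]
            congr 1
            funext t
            rw [Real.norm_eq_abs, hWm, abs_mul, abs_of_pos (hψpos y)]
          have h2 : (∫ t, ‖Wd2 (t, y)‖)
              = ∫ t, |D i (eqv (t, y))| * (SteinAux.φ σ (t - c) * ψ y) := by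
            congr 1
            funext t
            rw [Real.norm_eq_abs, hWd2, abs_mul,
              abs_of_pos (mul_pos (SteinAux.φ_pos σ _) (hψpos y))]
          rw [Real.norm_eq_abs, abs_of_nonneg (integral_nonneg fun t => norm_nonneg _)]
          rw [h1]
          calc (∫ t, |(t - c) * (g (eqv (t,y)) i - g (eqv (c,y)) i)
                  * SteinAux.φ σ (t - c)|) * ψ y
              ≤ (σ^2 * ∫ s, |fy' y s * SteinAux.φ σ s|) * ψ y :=
                mul_le_mul_of_nonneg_right hA (hψpos y).le
            _ = σ^2 * ∫ t, |D i (eqv (t, y))| * (SteinAux.φ σ (t - c) * ψ y) := hshift_abs y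
            _ = σ^2 * ∫ t, ‖Wd2 (t, y)‖ := by rw [h2]
    -- value of the Wm integral
    have hWmval : ∫ z, Wm z ∂((volume : Measure ℝ).prod volume)
        = σ^2 * ∫ z, Wd2 z ∂((volume : Measure ℝ).prod volume) := by
      rw [integral_prod_symm Wm hWmint, integral_prod_symm Wd2 hWd]
      rw [← integral_const_mul]
      refine integral_congr_ae ?_
      filter_upwards [hgood] with y hy
      obtain ⟨hI, _, hE⟩ := h1d y hy
      have h1 : (∫ t, Wm (t, y))
          = (∫ t, (t - c) * (g (eqv (t,y)) i - g (eqv (c,y)) i)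
              * SteinAux.φ σ (t - c)) * ψ y := by
        rw [← integral_mul_const]
      rw [h1, hE, hshift_val y]
    -- the slice integrability (for the "rest" part)
    have hsliceint : Integrable (fun y => g (eqv (c, y)) i * ψ y) volume := by
      set ε := SteinAux.φ σ 1 with hε
      have hεpos : 0 < ε := SteinAux.φ_pos σ 1
      set W2 : ℝ × (Fin n → ℝ) → ℝ := fun z =>
        (‖g (eqv z)‖ + |D i (eqv z)|) * (SteinAux.φ σ (z.1 - c) * ψ z.2) with hW2
      have hW2int : Integrable W2 ((volume : Measure ℝ).prod volume) := by
        refine ((hWg.add hWa).congr (Filter.Eventually.of_forall fun z => ?_))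
        show ‖g (eqv z)‖ * (SteinAux.φ σ (z.1 - c) * ψ z.2)
          + |D i (eqv z)| * (SteinAux.φ σ (z.1 - c) * ψ z.2) = W2 z
        simp only [hW2]
        ring
      have hprodres : (volume.restrict (Set.Ioc c (c+1))).prod (volume : Measure (Fin n → ℝ))
          = ((volume : Measure ℝ).prod volume).restrict ((Set.Ioc c (c+1)) ×ˢ Set.univ) := by
        rw [← MeasureTheory.Measure.prod_restrict, Measure.restrict_univ]
      have hW2res : Integrable W2 ((volume.restrict (Set.Ioc c (c+1))).prod volume) := by
        rw [hprodres]
        exact hW2int.integrableOn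
      have hInt0 := hW2res.integral_norm_prod_right
      refine Integrable.mono' (hInt0.const_mul ε⁻¹) ?_ (Filter.Eventually.of_forall fun y => ?_)
      · refine Continuous.aestronglyMeasurable ?_
        exact ((EuclideanSpace.proj (𝕜 := ℝ) i).continuous.comp (hgc.comp
          (heqvcont.comp (continuous_const.prodMk continuous_id)))).mul hψcont
      · -- pointwise bound for the slice
        have hfhat_cont : Continuous fun t : ℝ => g (eqv (t, y)) i :=
          (EuclideanSpace.proj (𝕜 := ℝ) i).continuous.comp (hgc.comp (hseccont y))
        have hDcont_y : Continuous fun t : ℝ => D i (eqv (t, y)) := (hDcont i).comp (hseccont y)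
        set Kd := ∫ s in Set.Ioc c (c+1), |D i (eqv (s, y))| with hKd
        have hKd_nonneg : 0 ≤ Kd :=
          setIntegral_nonneg measurableSet_Ioc fun s _ => abs_nonneg _
        have hstep1 : ∀ t ∈ Set.Ioc c (c+1), |g (eqv (c, y)) i| ≤ |g (eqv (t, y)) i| + Kd := by
          intro t ht
          have hftc : g (eqv (t,y)) i - g (eqv (c,y)) i = ∫ s in c..t, D i (eqv (s, y)) :=
            (intervalIntegral.integral_eq_sub_of_hasDerivAt
              (fun s _ => hsecderiv y s) (hDcont_y.intervalIntegrable _ _)).symm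
          have h1 : |g (eqv (t,y)) i - g (eqv (c,y)) i| ≤ Kd := by
            rw [hftc]
            refine (intervalIntegral.abs_integral_le_integral_abs ht.1.le).trans ?_
            rw [intervalIntegral.integral_of_le ht.1.le, hKd]
            refine setIntegral_mono_set (hDcont_y.abs.integrableOn_Ioc) ?_ ?_
            · exact Filter.Eventually.of_forall fun s => abs_nonneg _
            · exact HasSubset.Subset.eventuallyLE (Set.Ioc_subset_Ioc_right ht.2)
          have h2 : |g (eqv (c,y)) i| - |g (eqv (t,y)) i|
              ≤ |g (eqv (c,y)) i - g (eqv (t,y)) i| := abs_sub_abs_le_abs_sub _ _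
          rw [abs_sub_comm] at h2
          linarith
        have hεle : ∀ t ∈ Set.Ioc c (c+1), ε ≤ SteinAux.φ σ (t - c) := by
          intro t ht
          simp only [hε, SteinAux.φ]
          refine Real.exp_le_exp.2 ?_
          have h2 : (0:ℝ) < 2*σ^2 := by positivity
          rw [div_le_div_iff₀ h2 h2]
          have h3 : (t - c)^2 ≤ 1 := by nlinarith [ht.1, ht.2]
          nlinarith [mul_le_mul_of_nonneg_right h3 h2.le]
        set I1 := ∫ t in Set.Ioc c (c+1), ‖g (eqv (t,y))‖ * SteinAux.φ σ (t - c) with hI1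
        set I2 := ∫ t in Set.Ioc c (c+1), |D i (eqv (t,y))| * SteinAux.φ σ (t - c) with hI2
        have hI1int : IntegrableOn (fun t => ‖g (eqv (t,y))‖ * SteinAux.φ σ (t - c))
            (Set.Ioc c (c+1)) :=
          ((hgc.comp (hseccont y)).norm.mul ((SteinAux.φ_cont σ).comp
            (continuous_id.sub continuous_const))).integrableOn_Ioc
        have hI2int : IntegrableOn (fun t => |D i (eqv (t,y))| * SteinAux.φ σ (t - c))
            (Set.Ioc c (c+1)) :=
          (hDcont_y.abs.mul ((SteinAux.φ_cont σ).comp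
            (continuous_id.sub continuous_const))).integrableOn_Ioc
        have hbnd1 : |g (eqv (c,y)) i|
            ≤ (∫ t in Set.Ioc c (c+1), |g (eqv (t,y)) i|) + Kd := by
          have hconst_eq : |g (eqv (c,y)) i| = ∫ _t in Set.Ioc c (c+1), |g (eqv (c,y)) i| := by
            rw [setIntegral_const, Real.volume_real_Ioc]
            norm_num
          rw [hconst_eq]
          have hmono := setIntegral_mono_on
            (integrableOn_const (by rw [Real.volume_Ioc]; norm_num))
            ((hfhat_cont.abs.add continuous_const).integrableOn_Ioc)
            measurableSet_Ioc hstep1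
          refine hmono.trans (le_of_eq ?_)
          simp only [Pi.add_apply]
          rw [integral_add (hfhat_cont.abs.integrableOn_Ioc) (integrableOn_const
            (by rw [Real.volume_Ioc]; norm_num))]
          rw [setIntegral_const, Real.volume_real_Ioc]
          norm_num
          exact hKd.symm
        have hbnd2 : (∫ t in Set.Ioc c (c+1), |g (eqv (t,y)) i|) ≤ ε⁻¹ * I1 := by
          rw [hI1, ← integral_const_mul]
          refine setIntegral_mono_on (hfhat_cont.abs.integrableOn_Ioc)
            (hI1int.const_mul _) measurableSet_Ioc ?_
          intro t ht
          have h1 : |g (eqv (t,y)) i| ≤ ‖g (eqv (t,y))‖ := SteinAux.abs_coord_le_norm _ i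
          have h2 := hεle t ht
          have h3 : ‖g (eqv (t,y))‖ * ε ≤ ‖g (eqv (t,y))‖ * SteinAux.φ σ (t - c) :=
            mul_le_mul_of_nonneg_left h2 (norm_nonneg _)
          rw [← mul_le_mul_iff_right₀ hεpos, ← mul_assoc, mul_inv_cancel₀ hεpos.ne', one_mul]
          calc ε * |g (eqv (t,y)) i| ≤ ε * ‖g (eqv (t,y))‖ :=
              mul_le_mul_of_nonneg_left h1 hεpos.le
            _ ≤ ‖g (eqv (t,y))‖ * SteinAux.φ σ (t - c) := by rw [mul_comm]; exact h3
        have hbnd3 : Kd ≤ ε⁻¹ * I2 := by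
          rw [hI2, ← integral_const_mul, hKd]
          refine setIntegral_mono_on (hDcont_y.abs.integrableOn_Ioc)
            (hI2int.const_mul _) measurableSet_Ioc ?_
          intro t ht
          have h2 := hεle t ht
          have h3 : |D i (eqv (t,y))| * ε ≤ |D i (eqv (t,y))| * SteinAux.φ σ (t - c) :=
            mul_le_mul_of_nonneg_left h2 (abs_nonneg _)
          rw [← mul_le_mul_iff_right₀ hεpos, ← mul_assoc, mul_inv_cancel₀ hεpos.ne', one_mul]
          calc ε * |D i (eqv (t,y))| = |D i (eqv (t,y))| * ε := mul_comm _ _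
            _ ≤ |D i (eqv (t,y))| * SteinAux.φ σ (t - c) := h3
        have hW2eq : (∫ t, ‖W2 (t, y)‖ ∂(volume.restrict (Set.Ioc c (c+1))))
            = (I1 + I2) * ψ y := by
          have h1 : (fun t => ‖W2 (t, y)‖) = fun t =>
              ((‖g (eqv (t,y))‖ * SteinAux.φ σ (t - c))
                + (|D i (eqv (t,y))| * SteinAux.φ σ (t - c))) * ψ y := by
            funext t
            rw [Real.norm_eq_abs, hW2]
            have hnn : (0:ℝ) ≤ (‖g (eqv (t,y))‖ + |D i (eqv (t,y))|)
                * (SteinAux.φ σ (t - c) * ψ y) := by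
              have := (SteinAux.φ_pos σ (t - c)).le
              have := (hψpos y).le
              positivity
            rw [abs_of_nonneg hnn]
            ring
          rw [h1, integral_mul_const, integral_add hI1int hI2int]
        rw [hW2eq]
        have hgoal1 : ‖g (eqv (c,y)) i * ψ y‖ = |g (eqv (c,y)) i| * ψ y := by
          rw [Real.norm_eq_abs, abs_mul, abs_of_pos (hψpos y)]
        rw [hgoal1]
        calc |g (eqv (c,y)) i| * ψ y
            ≤ (ε⁻¹ * I1 + ε⁻¹ * I2) * ψ y := by
              refine mul_le_mul_of_nonneg_right ?_ (hψpos y).le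
              calc |g (eqv (c,y)) i| ≤ (∫ t in Set.Ioc c (c+1), |g (eqv (t,y)) i|) + Kd := hbnd1
                _ ≤ ε⁻¹ * I1 + ε⁻¹ * I2 := add_le_add hbnd2 hbnd3
          _ = ε⁻¹ * ((I1 + I2) * ψ y) := by ring
    have htφbase : Integrable (fun t : ℝ => t * SteinAux.φ σ t) volume := by
      have h := integrable_mul_exp_neg_mul_sq (b := 1/(2*σ^2)) (by positivity)
      refine h.congr (Filter.Eventually.of_forall fun t => ?_)
      simp only [SteinAux.φ]
      congr 2
      field_simp
    have htφint : Integrable (fun t : ℝ => (t - c) * SteinAux.φ σ (t - c)) volume :=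
      htφbase.comp_sub_right c
    have htφzero : (∫ t : ℝ, (t - c) * SteinAux.φ σ (t - c)) = 0 := by
      rw [integral_sub_right_eq_self (fun t => t * SteinAux.φ σ t) c]
      have hodd := integral_neg_eq_self (fun t : ℝ => t * SteinAux.φ σ t) volume
      have : (fun t : ℝ => -t * SteinAux.φ σ (-t)) = fun t : ℝ => -(t * SteinAux.φ σ t) := by
        funext t
        rw [SteinAux.φ_neg]
        ring
      rw [this, MeasureTheory.integral_neg] at hodd
      linarith
    have hWr : Integrable (fun z : ℝ × (Fin n → ℝ) =>
        ((z.1 - c) * SteinAux.φ σ (z.1 - c)) * (g (eqv (c, z.2)) i * ψ z.2))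
        ((volume : Measure ℝ).prod volume) := htφint.mul_prod hsliceint
    have hWrval : ∫ z, ((z.1 - c) * SteinAux.φ σ (z.1 - c)) * (g (eqv (c, z.2)) i * ψ z.2)
        ∂((volume : Measure ℝ).prod volume) = 0 := by
      rw [integral_prod_mul (fun t => (t - c) * SteinAux.φ σ (t - c))
        (fun y => g (eqv (c, y)) i * ψ y), htφzero, zero_mul]
    -- transfer back to Euclidean space
    set q : EuclideanSpace ℝ (Fin (n+1)) → ℝ :=
      fun x => g (eqv (c, fun j => x (i.succAbove j))) i with hq
    have hqeqv : ∀ z : ℝ × (Fin n → ℝ), q (eqv z) = g (eqv (c, z.2)) i := by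
      rintro ⟨t, y⟩
      have hy : (fun j => (eqv (t, y)) (i.succAbove j)) = y := by
        funext j
        rw [hSapp, Fin.insertNth_apply_succAbove]
      simp only [hq, hy]
    have hxi : ∀ z : ℝ × (Fin n → ℝ), (eqv z) i = z.1 := by
      rintro ⟨t, y⟩
      rw [hSapp, Fin.insertNth_apply_same]
    set Gmid : EuclideanSpace ℝ (Fin (n+1)) → ℝ :=
      fun x => (x i - c) * (g x i - q x) * γ x with hGmid
    set Grest : EuclideanSpace ℝ (Fin (n+1)) → ℝ :=
      fun x => (x i - c) * q x * γ x with hGrest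
    have hGmid_comp : (fun z => Gmid (eqv z)) = Wm := by
      funext z
      simp only [hGmid, hWm]
      rw [hxi z, hqeqv z, hfac z]
      ring
    have hGrest_comp : (fun z => Grest (eqv z)) = fun z =>
        ((z.1 - c) * SteinAux.φ σ (z.1 - c)) * (g (eqv (c, z.2)) i * ψ z.2) := by
      funext z
      simp only [hGrest]
      rw [hxi z, hqeqv z, hfac z]
      ring
    have hGmid_int : Integrable Gmid volume := by
      rw [htransInt Gmid, hGmid_comp]
      exact hWmint
    have hGrest_int : Integrable Grest volume := by
      rw [htransInt Grest, hGrest_comp]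
      exact hWr
    have hGmid_val : ∫ x, Gmid x = σ^2 * ∫ x, D i x * γ x := by
      rw [← htransVal Gmid]
      have h1 : ∫ z, Gmid (eqv z) ∂((volume : Measure ℝ).prod volume)
          = ∫ z, Wm z ∂((volume : Measure ℝ).prod volume) := by rw [hGmid_comp]
      rw [h1, hWmval]
      congr 1
      have h2 : (fun z => Wd2 z) = fun z => (fun x => D i x * γ x) (eqv z) := by
        funext z
        simp only [hWd2]
        rw [hfac z]
      rw [h2, htransVal (fun x => D i x * γ x)]
    have hGrest_val : ∫ x, Grest x = 0 := by
      rw [← htransVal Grest]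
      have h1 : ∫ z, Grest (eqv z) ∂((volume : Measure ℝ).prod volume)
          = ∫ z, ((z.1 - c) * SteinAux.φ σ (z.1 - c)) * (g (eqv (c, z.2)) i * ψ z.2)
            ∂((volume : Measure ℝ).prod volume) := by rw [hGrest_comp]
      rw [h1, hWrval]
    have hsplit : (fun x : EuclideanSpace ℝ (Fin (n+1)) => (x i - c) * g x i * γ x)
        = fun x => Gmid x + Grest x := by
      funext x
      simp only [hGmid, hGrest]
      ring
    constructor
    · rw [hsplit]
      exact hGmid_int.add hGrest_int
    · rw [hsplit, integral_add hGmid_int hGrest_int, hGmid_val, hGrest_val, add_zero]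

  have hsum : (fun x => ⟪x - θ, g x⟫ * γ x)
      = fun x => ∑ i, (x i - θ i) * g x i * γ x := by
    funext x
    rw [PiLp.inner_apply, Finset.sum_mul]
    refine Finset.sum_congr rfl fun i _ => ?_
    simp only [RCLike.inner_apply', conj_trivial, PiLp.sub_apply]
  rw [hsum, integral_finset_sum _ (fun i _ => (key i).1)]
  have hvd : (fun x => vdiv g x * γ x) = fun x => ∑ i, D i x * γ x := by
    funext x
    rw [vdiv, Finset.sum_mul]
  rw [hvd, integral_finset_sum _ (fun i _ => hDint i), Finset.mul_sum]
  exact Finset.sum_congr rfl fun i _ => (key i).2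
end

section
/- Let p ≥ 1, θ ∈ ℝ^p, σ > 0, and let X be a random vector in ℝ^p with the N(θ, σ²I) distribution. Let g : ℝ^p → ℝ^p be continuously differentiable with E‖g(X)‖² < ∞, E|(X-θ)·g(X)| < ∞ and E|∂g_i/∂x_i(X)| < ∞ for each i. Then the risk of the estimator X + σ²g(X) satisfies E‖X + σ²g(X) - θ‖² = E‖X-θ‖² + σ⁴ E[‖g(X)‖² + 2 div g(X)]. Consequently, if ‖g(x)‖² + 2 div g(x) ≤ 0 for all x, with strict inequality on a set of positive Lebesgue measure, then E‖X + σ²g(X) - θ‖² < E‖X-θ‖², i.e., X + σ²g(X) dominates X under squared error loss. (Proposition 3.1.) -/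
open MeasureTheory Real
open scoped RealInnerProductSpace

lemma integral_line_deriv_eq_zero {n : ℕ} (i : Fin (n + 1))
    (f f' : EuclideanSpace ℝ (Fin (n + 1)) → ℝ)
    (hd : ∀ (x : EuclideanSpace ℝ (Fin (n + 1))) (t : ℝ),
      HasDerivAt
        (fun s : ℝ => f (x + s • (EuclideanSpace.single i 1 : EuclideanSpace ℝ (Fin (n + 1)))))
        (f' (x + t • (EuclideanSpace.single i 1 : EuclideanSpace ℝ (Fin (n + 1))))) t)
    (hf : Integrable f) (hf' : Integrable f') :
    ∫ x, f' x = 0 := by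
  classical
  set e : EuclideanSpace ℝ (Fin (n + 1)) := EuclideanSpace.single i 1 with he
  let ψ : (ℝ × (Fin n → ℝ)) ≃ᵐ EuclideanSpace ℝ (Fin (n + 1)) :=
    (MeasurableEquiv.piFinSuccAbove (fun _ : Fin (n + 1) => ℝ) i).symm.trans
      (MeasurableEquiv.toLp 2 (Fin (n + 1) → ℝ))
  have mpψ : MeasurePreserving ψ := by
    exact ((EuclideanSpace.volume_preserving_symm_measurableEquiv_toLp (Fin (n + 1))).symm).comp
      ((volume_preserving_piFinSuccAbove (fun _ : Fin (n + 1) => ℝ) i).symm)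
  have hline : ∀ (t : ℝ) (y : Fin n → ℝ), ψ (t, y) = ψ (0, y) + t • e := by
    intro t y
    have h1 : ∀ (s : ℝ) (j : Fin (n + 1)), ψ (s, y) j = Fin.insertNth (α := fun _ => ℝ) i s y j := by
      intro s j
      simp [ψ, MeasurableEquiv.piFinSuccAbove_symm_apply, MeasurableEquiv.coe_toLp]
    apply PiLp.ext
    intro j
    show ψ (t, y) j = ψ (0, y) j + t * e j
    rw [h1 t, h1 0]
    rcases eq_or_ne j i with rfl | hj
    · simp [he, EuclideanSpace.single_apply]
    · obtain ⟨k, rfl⟩ := Fin.exists_succAbove_eq hj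
      simp [he, EuclideanSpace.single_apply, Fin.succAbove_ne i k]
  have emb := ψ.measurableEmbedding
  have hFi : Integrable (f' ∘ ψ) := (mpψ.integrable_comp_emb emb).mpr hf'
  have hfi : Integrable (f ∘ ψ) := (mpψ.integrable_comp_emb emb).mpr hf
  have key : ∫ z, (f' ∘ ψ) z ∂((volume : Measure ℝ).prod (volume : Measure (Fin n → ℝ))) = 0 := by
    rw [integral_prod_symm _ hFi]
    have h0 : ∀ᵐ (y : Fin n → ℝ), (∫ t : ℝ, (f' ∘ ψ) (t, y)) = 0 := by
      filter_upwards [hFi.prod_left_ae, hfi.prod_left_ae] with y h1 h2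
      apply integral_eq_zero_of_hasDerivAt_of_integrable (f := fun t => f (ψ (t, y)))
      · intro t
        simp only [Function.comp_apply]
        have hrep : (fun s : ℝ => f (ψ (s, y))) = fun s : ℝ => f (ψ (0, y) + s • e) :=
          funext fun s => congrArg f (hline s y)
        rw [hrep, hline t y]
        exact hd (ψ (0, y)) t
      · exact h1
      · exact h2
    calc ∫ y, ∫ t, (f' ∘ ψ) (t, y) = ∫ y : Fin n → ℝ, (0:ℝ) := integral_congr_ae h0
      _ = 0 := integral_zero _ _
  rw [← mpψ.integral_comp emb f']
  exact key

section gauss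
variable {p : ℕ} (θ : EuclideanSpace ℝ (Fin p)) {σ : ℝ}

lemma gaussDensity_pos (hσ : 0 < σ) (x : EuclideanSpace ℝ (Fin p)) : 0 < gaussDensity θ σ x :=
  mul_pos (Real.rpow_pos_of_pos (by positivity) _) (Real.exp_pos _)

lemma continuous_gaussDensity : Continuous (gaussDensity θ σ) := by
  unfold gaussDensity
  fun_prop

lemma integrable_exp_neg_mul_norm_sub {b : ℝ} (hb : 0 < b) :
    Integrable (fun x : EuclideanSpace ℝ (Fin p) => Real.exp (-b * ‖x - θ‖ ^ 2)) := by
  have h1 : Integrable (fun x : EuclideanSpace ℝ (Fin p) => Real.exp (-b * ‖x‖ ^ 2)) := by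
    have h2 := (GaussianFourier.integrable_cexp_neg_mul_sq_norm_add
      (V := EuclideanSpace ℝ (Fin p)) (b := (b : ℂ)) (by simpa using hb) 0 0).norm
    refine h2.congr (Filter.Eventually.of_forall fun x => ?_)
    simp only [Complex.norm_exp]
    norm_num
    left
    norm_cast
  exact h1.comp_sub_right θ

lemma integrable_gaussDensity (hσ : 0 < σ) : Integrable (gaussDensity θ σ) := by
  have hb2 : (0:ℝ) < (2 * σ ^ 2)⁻¹ := by positivity
  have harg : ∀ r : ℝ, -(2 * σ ^ 2)⁻¹ * r = -r / (2 * σ ^ 2) := fun r => by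
    field_simp
  have h : Integrable (fun x : EuclideanSpace ℝ (Fin p) =>
      ((2 * π * σ ^ 2) ^ (-(p : ℝ) / 2)) * Real.exp (-(2 * σ ^ 2)⁻¹ * ‖x - θ‖ ^ 2)) :=
    (integrable_exp_neg_mul_norm_sub θ hb2).const_mul _
  simp only [harg] at h
  exact h

lemma integrable_sq_norm_gaussDensity (hσ : 0 < σ) :
    Integrable (fun x : EuclideanSpace ℝ (Fin p) => ‖x - θ‖ ^ 2 * gaussDensity θ σ x) := by
  set C : ℝ := (2 * π * σ ^ 2) ^ (-(p : ℝ) / 2) with hC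
  set a : ℝ := (4 * σ ^ 2)⁻¹ with ha
  have hb : (0:ℝ) < a := by positivity
  have h := ((integrable_exp_neg_mul_norm_sub θ (p := p) hb).const_mul (C * (4 * σ ^ 2)))
  refine h.mono' ?_ (Filter.Eventually.of_forall fun x => ?_)
  · exact (((continuous_id.sub continuous_const).norm.pow 2).mul
      (continuous_gaussDensity θ)).aestronglyMeasurable
  · have hφ : gaussDensity θ σ x = C * Real.exp (-‖x - θ‖ ^ 2 / (2 * σ ^ 2)) := rfl
    have hCpos : 0 < C := Real.rpow_pos_of_pos (by positivity) _
    set r := ‖x - θ‖ ^ 2 with hr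
    have hr0 : 0 ≤ r := by positivity
    have h1 : r ≤ (4 * σ ^ 2) * Real.exp (a * r) := by
      have := Real.add_one_le_exp (a * r)
      have h4 : (4 * σ ^ 2) * a = 1 := by
        rw [ha]; field_simp
      nlinarith [Real.exp_pos (a * r)]
    have h2 : Real.exp (-r / (2 * σ ^ 2)) = Real.exp (-a * r) * Real.exp (-a * r) := by
      rw [← Real.exp_add]
      congr 1
      rw [ha]
      field_simp
      ring
    have key : r * Real.exp (-r / (2 * σ ^ 2)) ≤ (4 * σ ^ 2) * Real.exp (-a * r) := by
      rw [h2, ← mul_assoc]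
      have step : r * Real.exp (-a * r) ≤ (4 * σ ^ 2) * Real.exp (a * r) * Real.exp (-a * r) :=
        mul_le_mul_of_nonneg_right h1 (Real.exp_pos _).le
      calc r * Real.exp (-a * r) * Real.exp (-a * r)
          ≤ (4 * σ ^ 2) * Real.exp (a * r) * Real.exp (-a * r) * Real.exp (-a * r) :=
            mul_le_mul_of_nonneg_right step (Real.exp_pos _).le
        _ = (4 * σ ^ 2) * (Real.exp (a * r) * Real.exp (-a * r)) * Real.exp (-a * r) := by ring
        _ = (4 * σ ^ 2) * Real.exp (-a * r) := by
            rw [← Real.exp_add]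
            simp
    have : ‖r * gaussDensity θ σ x‖ = C * (r * Real.exp (-r / (2 * σ ^ 2))) := by
      rw [hφ, Real.norm_eq_abs, abs_of_nonneg (by positivity)]
      ring
    rw [this]
    calc C * (r * Real.exp (-r / (2 * σ ^ 2))) ≤ C * ((4 * σ ^ 2) * Real.exp (-a * r)) :=
          mul_le_mul_of_nonneg_left key hCpos.le
      _ = C * (4 * σ ^ 2) * Real.exp (-a * r) := by ring

end gauss

lemma abs_coord_le {p : ℕ} (v : EuclideanSpace ℝ (Fin p)) (i : Fin p) : |v i| ≤ ‖v‖ := by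
  have h := abs_real_inner_le_norm v (EuclideanSpace.single i (1 : ℝ))
  have h2 : ⟪v, EuclideanSpace.single i (1 : ℝ)⟫ = v i := by
    rw [EuclideanSpace.inner_single_right]
    simp
  rw [h2, EuclideanSpace.norm_single] at h
  simpa using h

lemma hasDerivAt_line_gauss {p : ℕ} (θ : EuclideanSpace ℝ (Fin p)) {σ : ℝ} (hσ : 0 < σ)
    (i : Fin p) (x : EuclideanSpace ℝ (Fin p)) (t : ℝ) :
    HasDerivAt (fun s : ℝ => gaussDensity θ σ (x + s • EuclideanSpace.single i 1))
      (-(σ ^ 2)⁻¹ *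
          ((x + t • EuclideanSpace.single i 1 - θ : EuclideanSpace ℝ (Fin p)) i) *
        gaussDensity θ σ (x + t • EuclideanSpace.single i 1)) t := by
  set e : EuclideanSpace ℝ (Fin p) := EuclideanSpace.single i 1 with he
  have hl : HasDerivAt (fun s : ℝ => x + s • e) e t := by
    simpa using ((hasDerivAt_id t).smul_const e).const_add x
  have hc : HasDerivAt (fun s : ℝ => x + s • e - θ) e t := hl.sub_const θ
  have hn : HasDerivAt (fun s : ℝ => ‖x + s • e - θ‖ ^ 2)
      (2 * ⟪x + t • e - θ, e⟫) t := hc.norm_sq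
  have hinner : ⟪x + t • e - θ, e⟫ = (x + t • e - θ) i := by
    rw [he, EuclideanSpace.inner_single_right]
    simp
  rw [hinner] at hn
  have hu : HasDerivAt (fun s : ℝ => -‖x + s • e - θ‖ ^ 2 / (2 * σ ^ 2))
      (-(2 * ((x + t • e - θ) i)) / (2 * σ ^ 2)) t := hn.neg.div_const _
  have hexp := hu.exp
  have hfin := hexp.const_mul ((2 * π * σ ^ 2) ^ (-(p : ℝ) / 2))
  have heq : (fun s : ℝ => (2 * π * σ ^ 2) ^ (-(p : ℝ) / 2) *
      Real.exp (-‖x + s • e - θ‖ ^ 2 / (2 * σ ^ 2))) =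
      fun s : ℝ => gaussDensity θ σ (x + s • e) := rfl
  rw [heq] at hfin
  convert hfin using 1
  show _ = (2 * π * σ ^ 2) ^ (-(p : ℝ) / 2) *
    (Real.exp (-‖x + t • e - θ‖ ^ 2 / (2 * σ ^ 2)) * (-(2 * ((x + t • e - θ) i)) / (2 * σ ^ 2)))
  have hσ2 : σ ^ 2 ≠ 0 := by positivity
  unfold gaussDensity
  field_simp
  all_goals rfl

section stein
variable {p : ℕ}

lemma continuous_dcoord (g : EuclideanSpace ℝ (Fin p) → EuclideanSpace ℝ (Fin p))
    (hg : ContDiff ℝ 1 g) (i : Fin p) :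
    Continuous (fun x => fderiv ℝ g x (EuclideanSpace.single i 1) i) := by
  have hfd : Continuous (fun x => fderiv ℝ g x) := hg.continuous_fderiv one_ne_zero
  have h1 : Continuous (fun x => fderiv ℝ g x (EuclideanSpace.single i 1)) :=
    hfd.clm_apply continuous_const
  exact (EuclideanSpace.proj i).continuous.comp h1

lemma integrable_coord_mul_gauss (θ : EuclideanSpace ℝ (Fin p)) {σ : ℝ} (hσ : 0 < σ)
    (g : EuclideanSpace ℝ (Fin p) → EuclideanSpace ℝ (Fin p)) (hg : ContDiff ℝ 1 g)
    (hint1 : Integrable (fun x => ‖g x‖ ^ 2 * gaussDensity θ σ x)) (i : Fin p) :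
    Integrable (fun x => g x i * gaussDensity θ σ x) := by
  have hB : Integrable (fun x => (1/2 : ℝ) *
      (gaussDensity θ σ x + ‖g x‖ ^ 2 * gaussDensity θ σ x)) :=
    ((integrable_gaussDensity θ hσ).add hint1).const_mul _
  refine hB.mono' ?_ (Filter.Eventually.of_forall fun x => ?_)
  · exact (((EuclideanSpace.proj i).continuous.comp hg.continuous).mul
      (continuous_gaussDensity θ)).aestronglyMeasurable
  · have h1 : |g x i| ≤ ‖g x‖ := abs_coord_le (g x) i
    have h2 : (0:ℝ) ≤ gaussDensity θ σ x := (gaussDensity_pos θ hσ x).le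
    have h3 : ‖g x‖ ≤ (1 + ‖g x‖ ^ 2) / 2 := by nlinarith [sq_nonneg (‖g x‖ - 1)]
    rw [Real.norm_eq_abs, abs_mul, abs_of_nonneg h2]
    nlinarith [abs_nonneg (g x i), norm_nonneg (g x)]

lemma integrable_xcoord_mul_gauss (θ : EuclideanSpace ℝ (Fin p)) {σ : ℝ} (hσ : 0 < σ)
    (g : EuclideanSpace ℝ (Fin p) → EuclideanSpace ℝ (Fin p)) (hg : ContDiff ℝ 1 g)
    (hint1 : Integrable (fun x => ‖g x‖ ^ 2 * gaussDensity θ σ x)) (i : Fin p) :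
    Integrable (fun x =>
      (x - θ : EuclideanSpace ℝ (Fin p)) i * (g x i * gaussDensity θ σ x)) := by
  have hB : Integrable (fun x => (1/2 : ℝ) *
      (‖x - θ‖ ^ 2 * gaussDensity θ σ x + ‖g x‖ ^ 2 * gaussDensity θ σ x)) :=
    ((integrable_sq_norm_gaussDensity θ hσ).add hint1).const_mul _
  refine hB.mono' ?_ (Filter.Eventually.of_forall fun x => ?_)
  · exact (((EuclideanSpace.proj i).continuous.comp
      (continuous_id.sub continuous_const)).mul
      (((EuclideanSpace.proj i).continuous.comp hg.continuous).mul
        (continuous_gaussDensity θ))).aestronglyMeasurable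
  · have h1 : |g x i| ≤ ‖g x‖ := abs_coord_le (g x) i
    have h1' : |(x - θ : EuclideanSpace ℝ (Fin p)) i| ≤ ‖x - θ‖ := abs_coord_le _ i
    have h2 : (0:ℝ) ≤ gaussDensity θ σ x := (gaussDensity_pos θ hσ x).le
    have h3 : ‖x - θ‖ * ‖g x‖ ≤ (‖x - θ‖ ^ 2 + ‖g x‖ ^ 2) / 2 := by
      nlinarith [sq_nonneg (‖x - θ‖ - ‖g x‖)]
    rw [Real.norm_eq_abs, abs_mul, abs_mul, abs_of_nonneg h2]
    have h4 : |(x - θ : EuclideanSpace ℝ (Fin p)) i| * |g x i| ≤ ‖x - θ‖ * ‖g x‖ :=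
      mul_le_mul h1' h1 (abs_nonneg _) (norm_nonneg _)
    nlinarith [abs_nonneg ((x - θ : EuclideanSpace ℝ (Fin p)) i), abs_nonneg (g x i)]

lemma integrable_dcoord_mul_gauss (θ : EuclideanSpace ℝ (Fin p)) {σ : ℝ} (hσ : 0 < σ)
    (g : EuclideanSpace ℝ (Fin p) → EuclideanSpace ℝ (Fin p)) (hg : ContDiff ℝ 1 g) (i : Fin p)
    (hint3i : Integrable
      (fun x => |fderiv ℝ g x (EuclideanSpace.single i 1) i| * gaussDensity θ σ x)) :
    Integrable (fun x => fderiv ℝ g x (EuclideanSpace.single i 1) i * gaussDensity θ σ x) := by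
  refine hint3i.mono' ?_ (Filter.Eventually.of_forall fun x => ?_)
  · exact ((continuous_dcoord g hg i).mul (continuous_gaussDensity θ)).aestronglyMeasurable
  · have h2 : (0:ℝ) ≤ gaussDensity θ σ x := (gaussDensity_pos θ hσ x).le
    rw [Real.norm_eq_abs, abs_mul, abs_of_nonneg h2]

end stein

lemma stein_coord {n : ℕ} (θ : EuclideanSpace ℝ (Fin (n + 1))) {σ : ℝ} (hσ : 0 < σ)
    (g : EuclideanSpace ℝ (Fin (n + 1)) → EuclideanSpace ℝ (Fin (n + 1)))
    (hg : ContDiff ℝ 1 g)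
    (hint1 : Integrable (fun x => ‖g x‖ ^ 2 * gaussDensity θ σ x))
    (i : Fin (n + 1))
    (hint3i : Integrable
      (fun x => |fderiv ℝ g x (EuclideanSpace.single i 1) i| * gaussDensity θ σ x)) :
    ∫ x, (x - θ : EuclideanSpace ℝ (Fin (n + 1))) i * (g x i * gaussDensity θ σ x) =
      σ ^ 2 * ∫ x, fderiv ℝ g x (EuclideanSpace.single i 1) i * gaussDensity θ σ x := by
  set e : EuclideanSpace ℝ (Fin (n + 1)) := EuclideanSpace.single i 1 with he
  set φ : EuclideanSpace ℝ (Fin (n + 1)) → ℝ := gaussDensity θ σ with hφ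
  set F : EuclideanSpace ℝ (Fin (n + 1)) → ℝ := fun z => g z i * φ z with hF
  set F' : EuclideanSpace ℝ (Fin (n + 1)) → ℝ := fun z =>
    fderiv ℝ g z e i * φ z - (σ ^ 2)⁻¹ * ((z - θ : EuclideanSpace ℝ (Fin (n + 1))) i * (g z i * φ z)) with hF'
  have hσ2 : (σ:ℝ) ^ 2 ≠ 0 := by positivity
  -- integrability
  have hFint : Integrable F := integrable_coord_mul_gauss θ hσ g hg hint1 i
  have hxgint : Integrable (fun x =>
      (x - θ : EuclideanSpace ℝ (Fin (n + 1))) i * (g x i * φ x)) :=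
    integrable_xcoord_mul_gauss θ hσ g hg hint1 i
  have hdint : Integrable (fun x => fderiv ℝ g x e i * φ x) :=
    integrable_dcoord_mul_gauss θ hσ g hg i hint3i
  have hF'int : Integrable F' := hdint.sub (hxgint.const_mul _)
  -- the derivative along the line
  have hd : ∀ (x : EuclideanSpace ℝ (Fin (n + 1))) (t : ℝ),
      HasDerivAt (fun s : ℝ => F (x + s • e)) (F' (x + t • e)) t := by
    intro x t
    have hl : HasDerivAt (fun s : ℝ => x + s • e) e t := by
      simpa using ((hasDerivAt_id t).smul_const e).const_add x
    have hgd : HasDerivAt (fun s : ℝ => g (x + s • e)) (fderiv ℝ g (x + t • e) e) t :=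
      (hg.differentiable one_ne_zero (x + t • e)).hasFDerivAt.comp_hasDerivAt t hl
    have hgi : HasDerivAt (fun s : ℝ => g (x + s • e) i) (fderiv ℝ g (x + t • e) e i) t := by
      have := (EuclideanSpace.proj i).hasFDerivAt.comp_hasDerivAt t hgd
      exact this
    have hφd := hasDerivAt_line_gauss θ hσ i x t
    have hmul := hgi.mul hφd
    convert hmul using 1
    case e'_9 =>
      simp only [hF', hF, hφ]
      ring
    all_goals rfl
  have hzero : ∫ x, F' x = 0 :=
    integral_line_deriv_eq_zero i F F' hd hFint hF'int
  rw [integral_sub hdint (hxgint.const_mul _), integral_const_mul] at hzero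
  have h := sub_eq_zero.mp hzero
  rw [h]
  field_simp

/-- **Proposition 3.1**: if `X ~ N(θ, σ²I)` and `g` is continuously differentiable with the
relevant integrability conditions, then the risk of `X + σ²g(X)` is
`E‖X - θ‖² + σ⁴ E[‖g(X)‖² + 2 div g(X)]`; consequently, if `‖g‖² + 2 div g ≤ 0` everywhere
with strict inequality on a set of positive Lebesgue measure, then `X + σ²g(X)` dominates `X`
under squared error loss. -/
theorem stein_risk_normal (p : ℕ) (hp : 1 ≤ p) (θ : EuclideanSpace ℝ (Fin p)) (σ : ℝ)
    (hσ : 0 < σ)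
    (g : EuclideanSpace ℝ (Fin p) → EuclideanSpace ℝ (Fin p)) (hg : ContDiff ℝ 1 g)
    (hint1 : Integrable (fun x => ‖g x‖ ^ 2 * gaussDensity θ σ x))
    (hint2 : Integrable (fun x => ⟪x - θ, g x⟫ * gaussDensity θ σ x))
    (hint3 : ∀ i : Fin p, Integrable
      (fun x => |fderiv ℝ g x (EuclideanSpace.single i 1) i| * gaussDensity θ σ x)) :
    (∫ x, ‖x + σ ^ 2 • g x - θ‖ ^ 2 * gaussDensity θ σ x =
        (∫ x, ‖x - θ‖ ^ 2 * gaussDensity θ σ x) +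
          σ ^ 4 * ∫ x, (‖g x‖ ^ 2 + 2 * vdiv g x) * gaussDensity θ σ x) ∧
      ((∀ x, ‖g x‖ ^ 2 + 2 * vdiv g x ≤ 0) →
        0 < volume {x | ‖g x‖ ^ 2 + 2 * vdiv g x < 0} →
          ∫ x, ‖x + σ ^ 2 • g x - θ‖ ^ 2 * gaussDensity θ σ x <
            ∫ x, ‖x - θ‖ ^ 2 * gaussDensity θ σ x) := by
  obtain ⟨n, rfl⟩ : ∃ n, p = n + 1 := ⟨p - 1, (Nat.succ_pred_eq_of_pos hp).symm⟩
  have hσ2 : (σ:ℝ) ^ 2 ≠ 0 := by positivity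
  -- integrability facts
  have hmom := integrable_sq_norm_gaussDensity θ (σ := σ) hσ
  have hdint : ∀ i, Integrable
      (fun x => fderiv ℝ g x (EuclideanSpace.single i 1) i * gaussDensity θ σ x) :=
    fun i => integrable_dcoord_mul_gauss θ hσ g hg i (hint3 i)
  have hdivint : Integrable (fun x => vdiv g x * gaussDensity θ σ x) := by
    have h := integrable_finset_sum (μ := volume) Finset.univ (fun i _ => hdint i)
    refine h.congr (Filter.Eventually.of_forall fun x => ?_)
    simp only [vdiv]
    rw [Finset.sum_mul]
  have hxgint : ∀ i : Fin (n + 1), Integrable (fun x =>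
      (x - θ : EuclideanSpace ℝ (Fin (n + 1))) i * (g x i * gaussDensity θ σ x)) :=
    fun i => integrable_xcoord_mul_gauss θ hσ g hg hint1 i
  -- Stein's identity
  have hstein : ∫ x, ⟪x - θ, g x⟫ * gaussDensity θ σ x =
      σ ^ 2 * ∫ x, vdiv g x * gaussDensity θ σ x := by
    have hinner : ∀ x : EuclideanSpace ℝ (Fin (n + 1)),
        ⟪x - θ, g x⟫ * gaussDensity θ σ x =
          ∑ i, (x - θ : EuclideanSpace ℝ (Fin (n + 1))) i * (g x i * gaussDensity θ σ x) := by
      intro x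
      rw [PiLp.inner_apply]
      simp only [RCLike.inner_apply, conj_trivial]
      rw [Finset.sum_mul]
      exact Finset.sum_congr rfl fun i _ => by ring
    calc ∫ x, ⟪x - θ, g x⟫ * gaussDensity θ σ x
        = ∫ x, ∑ i, (x - θ : EuclideanSpace ℝ (Fin (n + 1))) i *
            (g x i * gaussDensity θ σ x) :=
          integral_congr_ae (Filter.Eventually.of_forall hinner)
      _ = ∑ i, ∫ x, (x - θ : EuclideanSpace ℝ (Fin (n + 1))) i *
            (g x i * gaussDensity θ σ x) :=
          integral_finset_sum Finset.univ (fun i _ => hxgint i)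
      _ = ∑ i, σ ^ 2 * ∫ x, fderiv ℝ g x (EuclideanSpace.single i 1) i * gaussDensity θ σ x :=
          Finset.sum_congr rfl fun i _ => stein_coord θ hσ g hg hint1 i (hint3 i)
      _ = σ ^ 2 * ∑ i, ∫ x, fderiv ℝ g x (EuclideanSpace.single i 1) i * gaussDensity θ σ x := by
          rw [Finset.mul_sum]
      _ = σ ^ 2 * ∫ x, vdiv g x * gaussDensity θ σ x := by
          congr 1
          rw [← integral_finset_sum Finset.univ (fun i _ => hdint i)]
          refine integral_congr_ae (Filter.Eventually.of_forall fun x => ?_)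
          simp only [vdiv]
          rw [Finset.sum_mul]
  -- expansion of the risk
  have expand : ∀ x : EuclideanSpace ℝ (Fin (n + 1)),
      ‖x + σ ^ 2 • g x - θ‖ ^ 2 * gaussDensity θ σ x =
        ‖x - θ‖ ^ 2 * gaussDensity θ σ x +
          ((2 * σ ^ 2) * (⟪x - θ, g x⟫ * gaussDensity θ σ x) +
            σ ^ 4 * (‖g x‖ ^ 2 * gaussDensity θ σ x)) := by
    intro x
    have h1 : x + σ ^ 2 • g x - θ = (x - θ) + σ ^ 2 • g x := add_sub_right_comm x _ θ
    rw [h1, norm_add_sq_real, real_inner_smul_right, norm_smul, Real.norm_eq_abs,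
      abs_of_nonneg (sq_nonneg σ)]
    ring
  have hLHS : ∫ x, ‖x + σ ^ 2 • g x - θ‖ ^ 2 * gaussDensity θ σ x =
      (∫ x, ‖x - θ‖ ^ 2 * gaussDensity θ σ x) +
        ((2 * σ ^ 2) * (∫ x, ⟪x - θ, g x⟫ * gaussDensity θ σ x) +
          σ ^ 4 * ∫ x, ‖g x‖ ^ 2 * gaussDensity θ σ x) := by
    calc ∫ x, ‖x + σ ^ 2 • g x - θ‖ ^ 2 * gaussDensity θ σ x
        = ∫ x, (‖x - θ‖ ^ 2 * gaussDensity θ σ x +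
            ((2 * σ ^ 2) * (⟪x - θ, g x⟫ * gaussDensity θ σ x) +
              σ ^ 4 * (‖g x‖ ^ 2 * gaussDensity θ σ x))) :=
          integral_congr_ae (Filter.Eventually.of_forall expand)
      _ = (∫ x, ‖x - θ‖ ^ 2 * gaussDensity θ σ x) +
            ∫ x, ((2 * σ ^ 2) * (⟪x - θ, g x⟫ * gaussDensity θ σ x) +
              σ ^ 4 * (‖g x‖ ^ 2 * gaussDensity θ σ x)) :=
          integral_add hmom ((hint2.const_mul _).add (hint1.const_mul _))
      _ = (∫ x, ‖x - θ‖ ^ 2 * gaussDensity θ σ x) +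
            ((∫ x, (2 * σ ^ 2) * (⟪x - θ, g x⟫ * gaussDensity θ σ x)) +
              ∫ x, σ ^ 4 * (‖g x‖ ^ 2 * gaussDensity θ σ x)) := by
          rw [integral_add (hint2.const_mul _) (hint1.const_mul _)]
      _ = (∫ x, ‖x - θ‖ ^ 2 * gaussDensity θ σ x) +
            ((2 * σ ^ 2) * (∫ x, ⟪x - θ, g x⟫ * gaussDensity θ σ x) +
              σ ^ 4 * ∫ x, ‖g x‖ ^ 2 * gaussDensity θ σ x) := by
          rw [integral_const_mul, integral_const_mul]
  have hRHS : ∫ x, (‖g x‖ ^ 2 + 2 * vdiv g x) * gaussDensity θ σ x =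
      (∫ x, ‖g x‖ ^ 2 * gaussDensity θ σ x) +
        2 * ∫ x, vdiv g x * gaussDensity θ σ x := by
    rw [← integral_const_mul, ← integral_add hint1 (hdivint.const_mul _)]
    refine integral_congr_ae (Filter.Eventually.of_forall fun x => ?_)
    ring
  have main : ∫ x, ‖x + σ ^ 2 • g x - θ‖ ^ 2 * gaussDensity θ σ x =
      (∫ x, ‖x - θ‖ ^ 2 * gaussDensity θ σ x) +
        σ ^ 4 * ∫ x, (‖g x‖ ^ 2 + 2 * vdiv g x) * gaussDensity θ σ x := by
    rw [hLHS, hRHS, hstein]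
    ring
  refine ⟨main, fun hle hpos => ?_⟩
  -- the domination part
  have hWint : Integrable (fun x => (‖g x‖ ^ 2 + 2 * vdiv g x) * gaussDensity θ σ x) := by
    have h := hint1.add (hdivint.const_mul 2)
    refine h.congr (Filter.Eventually.of_forall fun x => ?_)
    simp only [Pi.add_apply]
    ring
  have hneg : ∫ x, (‖g x‖ ^ 2 + 2 * vdiv g x) * gaussDensity θ σ x < 0 := by
    have hnn : ∀ x, 0 ≤ -((‖g x‖ ^ 2 + 2 * vdiv g x) * gaussDensity θ σ x) := fun x =>
      neg_nonneg.2 (mul_nonpos_of_nonpos_of_nonneg (hle x) (gaussDensity_pos θ hσ x).le)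
    have hpos' : 0 < ∫ x, -((‖g x‖ ^ 2 + 2 * vdiv g x) * gaussDensity θ σ x) := by
      rw [integral_pos_iff_support_of_nonneg hnn hWint.neg]
      refine lt_of_lt_of_le hpos (measure_mono ?_)
      intro x hx
      simp only [Function.mem_support]
      have : (‖g x‖ ^ 2 + 2 * vdiv g x) * gaussDensity θ σ x < 0 :=
        mul_neg_of_neg_of_pos hx (gaussDensity_pos θ hσ x)
      intro hcon
      rw [neg_eq_zero] at hcon
      exact this.ne hcon
    rw [integral_neg] at hpos'
    linarith
  rw [main]
  nlinarith [pow_pos hσ 4]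
end

section
/- Let p, k be positive integers, B ∈ ℝ, and let f : [0,∞) → [0,∞) be measurable with 0 < ∫_0^∞ w^{(p+k)/2 + B + 1} f(w) dw < ∞. Let ρ : ℝ^p → [0,∞) be measurable, and fix x ∈ ℝ^p and u ∈ ℝ^k with u ≠ 0. Write t(θ) = ‖x-θ‖² + ‖u‖² and c = (p+k)/2 + B + 2, and assume ∫_{ℝ^p} t(θ)^{-c} ρ(θ) dθ and ∫_{ℝ^p} ‖θ‖ t(θ)^{-c} ρ(θ) dθ are finite with the former positive. Then, as vectors in ℝ^p, [∫_{ℝ^p} ∫_0^∞ θ · η^{(p+k)/2 + B + 1} f(η·t(θ)) ρ(θ) dη dθ] / [∫_{ℝ^p} ∫_0^∞ η^{(p+k)/2 + B + 1} f(η·t(θ)) ρ(θ) dη dθ] = [∫_{ℝ^p} θ · t(θ)^{-c} ρ(θ) dθ] / [∫_{ℝ^p} t(θ)^{-c} ρ(θ) dθ]. In particular, the generalized Bayes estimator E[θη | X,U]/E[η | X,U] for the model (X,U) ~ η^{(p+k)/2} f(η(‖x-θ‖²+‖u‖²)) with prior ρ(θ)η^B under loss η‖δ-θ‖² does not depend on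 f. (Lemma 6.1.) -/
open MeasureTheory Real

/-- **Lemma 6.1** (Maruyama): for the model `(X,U) ~ η^{(p+k)/2} f(η(‖x-θ‖²+‖u‖²))` with
prior `ρ(θ) η^B` and loss `η‖δ-θ‖²`, the generalized Bayes estimator
`E[θη|X,U]/E[η|X,U]` does not depend on `f`: it equals the ratio of the integrals of
`θ t(θ)^{-c} ρ(θ)` and `t(θ)^{-c} ρ(θ)`, where `t(θ) = ‖x-θ‖² + ‖u‖²` and
`c = (p+k)/2 + B + 2`. -/
theorem generalized_bayes_independent_of_f (p k : ℕ) (hp : 0 < p) (hk : 0 < k) (B : ℝ)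
    (f : ℝ → ℝ) (hf : ∀ t, 0 ≤ f t) (hfm : Measurable f)
    (hfint : IntegrableOn (fun w => w ^ (((p : ℝ) + k) / 2 + B + 1) * f w) (Set.Ioi 0))
    (hfpos : 0 < ∫ w in Set.Ioi (0 : ℝ), w ^ (((p : ℝ) + k) / 2 + B + 1) * f w)
    (ρ : EuclideanSpace ℝ (Fin p) → ℝ) (hρ : ∀ ϑ, 0 ≤ ρ ϑ) (hρm : Measurable ρ)
    (x : EuclideanSpace ℝ (Fin p)) (u : EuclideanSpace ℝ (Fin k)) (hu : u ≠ 0)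
    (hden : Integrable (fun ϑ : EuclideanSpace ℝ (Fin p) =>
      (‖x - ϑ‖ ^ 2 + ‖u‖ ^ 2) ^ (-(((p : ℝ) + k) / 2 + B + 2)) * ρ ϑ))
    (hdenpos : 0 < ∫ ϑ : EuclideanSpace ℝ (Fin p),
      (‖x - ϑ‖ ^ 2 + ‖u‖ ^ 2) ^ (-(((p : ℝ) + k) / 2 + B + 2)) * ρ ϑ)
    (hnum : Integrable (fun ϑ : EuclideanSpace ℝ (Fin p) =>
      ‖ϑ‖ * ((‖x - ϑ‖ ^ 2 + ‖u‖ ^ 2) ^ (-(((p : ℝ) + k) / 2 + B + 2)) * ρ ϑ))) :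
    (∫ ϑ : EuclideanSpace ℝ (Fin p),
          (∫ η in Set.Ioi (0 : ℝ),
            η ^ (((p : ℝ) + k) / 2 + B + 1) * f (η * (‖x - ϑ‖ ^ 2 + ‖u‖ ^ 2)) * ρ ϑ))⁻¹ •
        (∫ ϑ : EuclideanSpace ℝ (Fin p),
          (∫ η in Set.Ioi (0 : ℝ),
            η ^ (((p : ℝ) + k) / 2 + B + 1) * f (η * (‖x - ϑ‖ ^ 2 + ‖u‖ ^ 2)) * ρ ϑ) • ϑ) =
      (∫ ϑ : EuclideanSpace ℝ (Fin p),
          (‖x - ϑ‖ ^ 2 + ‖u‖ ^ 2) ^ (-(((p : ℝ) + k) / 2 + B + 2)) * ρ ϑ)⁻¹ •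
        (∫ ϑ : EuclideanSpace ℝ (Fin p),
          ((‖x - ϑ‖ ^ 2 + ‖u‖ ^ 2) ^ (-(((p : ℝ) + k) / 2 + B + 2)) * ρ ϑ) • ϑ) := by
  have hu0 : (0:ℝ) < ‖u‖ ^ 2 := by
    have : ‖u‖ ≠ 0 := by simpa using hu
    positivity
  set a : ℝ := ((p : ℝ) + k) / 2 + B + 1 with ha
  set I : ℝ := ∫ w in Set.Ioi (0 : ℝ), w ^ a * f w with hIdef
  have hI : 0 < I := hfpos
  have ht : ∀ ϑ : EuclideanSpace ℝ (Fin p), 0 < ‖x - ϑ‖ ^ 2 + ‖u‖ ^ 2 := fun ϑ => by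
    have : (0:ℝ) ≤ ‖x - ϑ‖ ^ 2 := by positivity
    linarith
  have key : ∀ ϑ : EuclideanSpace ℝ (Fin p),
      (∫ η in Set.Ioi (0 : ℝ), η ^ a * f (η * (‖x - ϑ‖ ^ 2 + ‖u‖ ^ 2)) * ρ ϑ)
        = I * ((‖x - ϑ‖ ^ 2 + ‖u‖ ^ 2) ^ (-(((p : ℝ) + k) / 2 + B + 2)) * ρ ϑ) := by
    intro ϑ
    set t : ℝ := ‖x - ϑ‖ ^ 2 + ‖u‖ ^ 2 with htdef
    have ht0 : 0 < t := ht ϑ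
    have hta : t ^ (-a) * t ^ a = 1 := by
      rw [← Real.rpow_add ht0]; simp
    have h1 : (∫ η in Set.Ioi (0 : ℝ), η ^ a * f (η * t) * ρ ϑ)
        = (∫ η in Set.Ioi (0 : ℝ), η ^ a * f (η * t)) * ρ ϑ :=
      integral_mul_const _ _
    have h2 : (∫ η in Set.Ioi (0 : ℝ), η ^ a * f (η * t))
        = t ^ (-a) * ∫ η in Set.Ioi (0 : ℝ), (η * t) ^ a * f (η * t) := by
      rw [← integral_const_mul]
      apply setIntegral_congr_fun measurableSet_Ioi
      intro η hη
      simp only []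
      have hη0 : (0:ℝ) ≤ η := (le_of_lt hη)
      rw [Real.mul_rpow hη0 ht0.le,
        show t ^ (-a) * (η ^ a * t ^ a * f (η * t))
            = (t ^ (-a) * t ^ a) * (η ^ a * f (η * t)) by ring, hta, one_mul]
    have h3 : (∫ η in Set.Ioi (0 : ℝ), (η * t) ^ a * f (η * t)) = t⁻¹ * I := by
      have := integral_comp_mul_right_Ioi (fun w => w ^ a * f w) 0 ht0
      simpa [smul_eq_mul] using this
    rw [h1, h2, h3]
    have hexp : t ^ (-a) * t⁻¹ = t ^ (-(((p : ℝ) + k) / 2 + B + 2)) := by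
      rw [← Real.rpow_neg_one t, ← Real.rpow_add ht0]
      rw [ha]; ring_nf
    calc t ^ (-a) * (t⁻¹ * I) * ρ ϑ
        = (t ^ (-a) * t⁻¹) * (I * ρ ϑ) := by ring
      _ = t ^ (-(((p : ℝ) + k) / 2 + B + 2)) * (I * ρ ϑ) := by rw [hexp]
      _ = I * (t ^ (-(((p : ℝ) + k) / 2 + B + 2)) * ρ ϑ) := by ring
  simp only [key]
  rw [integral_const_mul]
  have hsmul : ∀ ϑ : EuclideanSpace ℝ (Fin p),
      (I * ((‖x - ϑ‖ ^ 2 + ‖u‖ ^ 2) ^ (-(((p : ℝ) + k) / 2 + B + 2)) * ρ ϑ)) • ϑ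
        = I • (((‖x - ϑ‖ ^ 2 + ‖u‖ ^ 2) ^ (-(((p : ℝ) + k) / 2 + B + 2)) * ρ ϑ) • ϑ) :=
    fun ϑ => mul_smul _ _ _
  simp only [hsmul]
  rw [integral_smul, smul_smul, mul_inv,
    show I⁻¹ * (∫ ϑ : EuclideanSpace ℝ (Fin p),
        (‖x - ϑ‖ ^ 2 + ‖u‖ ^ 2) ^ (-(((p : ℝ) + k) / 2 + B + 2)) * ρ ϑ)⁻¹ * I
      = (∫ ϑ : EuclideanSpace ℝ (Fin p),
        (‖x - ϑ‖ ^ 2 + ‖u‖ ^ 2) ^ (-(((p : ℝ) + k) / 2 + B + 2)) * ρ ϑ)⁻¹ by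
      rw [mul_comm I⁻¹ _, mul_assoc, inv_mul_cancel₀ hI.ne', mul_one]]
end

section
/- Let p ≥ 1 be an integer, b > 0, a ∈ ℝ, η > 0, and θ ∈ ℝ^p with θ ≠ 0. Then ∫_0^1 (ηλ/(2π(1-λ)))^{p/2} exp(-ηλ‖θ‖²/(2(1-λ))) · η^{b/2 - p/2 + a} λ^{b/2 - p/2 - 1} (1-λ)^{p/2 - b/2 - 1} dλ = (2π)^{-p/2} 2^{b/2} Γ(b/2) · η^a ‖θ‖^{-b}. In other words, the hierarchical prior in which θ given (η,λ) is N(0, ((1-λ)/(ηλ))I) and (η,λ) has density proportional to η^{b/2 - p/2 + a} λ^{b/2 - p/2 - 1} (1-λ)^{-b/2 + p/2 - 1} on (0,∞)×(0,1) has unconditional density on (θ,η) proportional to η^a ‖θ‖^{-b}. (Lemma 6.2, part 2.) -/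
open MeasureTheory Real

/-- **Lemma 6.2, part 2**: the hierarchical prior in which `θ | (η,λ) ~ N(0, ((1-λ)/(ηλ))I)`
and `(η,λ)` has density proportional to
`η^{b/2-p/2+a} λ^{b/2-p/2-1} (1-λ)^{-b/2+p/2-1}` on `(0,∞) × (0,1)` has unconditional
density on `(θ,η)` proportional to `η^a ‖θ‖^{-b}`:
`∫_0^1 (ηλ/(2π(1-λ)))^{p/2} exp(-ηλ‖θ‖²/(2(1-λ))) η^{b/2-p/2+a} λ^{b/2-p/2-1}
  (1-λ)^{p/2-b/2-1} dλ = (2π)^{-p/2} 2^{b/2} Γ(b/2) η^a ‖θ‖^{-b}`. -/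
theorem hierarchical_prior_marginal (p : ℕ) (hp : 1 ≤ p) (b a η : ℝ) (hb : 0 < b)
    (hη : 0 < η) (θ : EuclideanSpace ℝ (Fin p)) (hθ : θ ≠ 0) :
    ∫ l in Set.Ioo (0 : ℝ) 1,
        (η * l / (2 * π * (1 - l))) ^ ((p : ℝ) / 2) *
          Real.exp (-(η * l * ‖θ‖ ^ 2) / (2 * (1 - l))) *
          η ^ (b / 2 - (p : ℝ) / 2 + a) * l ^ (b / 2 - (p : ℝ) / 2 - 1) *
          (1 - l) ^ ((p : ℝ) / 2 - b / 2 - 1) =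
      (2 * π) ^ (-(p : ℝ) / 2) * 2 ^ (b / 2) * Real.Gamma (b / 2) * η ^ a * ‖θ‖ ^ (-b) := by
  have hn : (0:ℝ) < ‖θ‖ := norm_pos_iff.mpr hθ
  set c : ℝ := η * ‖θ‖ ^ 2 / 2 with hc
  have hcpos : 0 < c := by positivity
  have h2π : (0:ℝ) < 2 * π := by positivity
  -- image of the substitution l ↦ l/(1-l)
  have himg : (fun l : ℝ => l / (1 - l)) '' Set.Ioo 0 1 = Set.Ioi 0 := by
    ext t
    simp only [Set.mem_image, Set.mem_Ioo, Set.mem_Ioi]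
    constructor
    · rintro ⟨l, ⟨h0, h1⟩, rfl⟩
      exact div_pos h0 (by linarith)
    · intro ht
      refine ⟨t / (1 + t), ⟨by positivity, by rw [div_lt_one (by linarith)]; linarith⟩, ?_⟩
      have h1t : (1:ℝ) + t ≠ 0 := by positivity
      field_simp
      ring
  have hinj : Set.InjOn (fun l : ℝ => l / (1 - l)) (Set.Ioo 0 1) := by
    intro x hx y hy h
    simp only at h
    rw [div_eq_div_iff (by linarith [hx.2]) (by linarith [hy.2])] at h
    linear_combination h
  have hderiv : ∀ x ∈ Set.Ioo (0:ℝ) 1,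
      HasDerivWithinAt (fun l : ℝ => l / (1 - l)) ((1 - x) ^ (-2 : ℝ)) (Set.Ioo 0 1) x := by
    intro x hx
    have h1x : (0:ℝ) < 1 - x := by linarith [hx.2]
    have hd : HasDerivAt (fun l : ℝ => l / (1 - l))
        ((1 * (1 - x) - x * (0 - 1)) / (1 - x) ^ 2) x :=
      (hasDerivAt_id x).div ((hasDerivAt_const x (1:ℝ)).sub (hasDerivAt_id x)) h1x.ne'
    have : ((1 * (1 - x) - x * (0 - 1)) / (1 - x) ^ 2) = (1 - x) ^ (-2 : ℝ) := by
      rw [Real.rpow_neg h1x.le, Real.rpow_two]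
      field_simp
      ring
    exact (this ▸ hd).hasDerivWithinAt
  have hkey : ∫ t in Set.Ioi (0:ℝ), t ^ (b/2 - 1) * Real.exp (-(c * t))
      = ∫ l in Set.Ioo (0:ℝ) 1,
          |(1 - l) ^ (-2 : ℝ)| •
            ((l/(1-l)) ^ (b/2-1) * Real.exp (-(c * (l/(1-l))))) := by
    rw [← himg]
    exact integral_image_eq_integral_abs_deriv_smul measurableSet_Ioo hderiv hinj _
  have hpoint : Set.EqOn
      (fun l : ℝ => (η * l / (2 * π * (1 - l))) ^ ((p : ℝ) / 2) *
          Real.exp (-(η * l * ‖θ‖ ^ 2) / (2 * (1 - l))) *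
          η ^ (b / 2 - (p : ℝ) / 2 + a) * l ^ (b / 2 - (p : ℝ) / 2 - 1) *
          (1 - l) ^ ((p : ℝ) / 2 - b / 2 - 1))
      (fun l : ℝ => ((2 * π) ^ (-(p:ℝ)/2) * η ^ (b/2 + a)) *
          (|(1 - l) ^ (-2 : ℝ)| •
            ((l/(1-l)) ^ (b/2-1) * Real.exp (-(c * (l/(1-l)))))))
      (Set.Ioo 0 1) := by
    intro l hl
    obtain ⟨h0l, hl1⟩ := hl
    have h1l : (0:ℝ) < 1 - l := by linarith
    have hbase : (0:ℝ) < η * l / (2 * π * (1 - l)) := by positivity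
    have hql : (0:ℝ) < l / (1 - l) := by positivity
    have habs : |(1 - l) ^ (-2 : ℝ)| = (1 - l) ^ (-2 : ℝ) :=
      abs_of_pos (Real.rpow_pos_of_pos h1l _)
    have hE : -(η * l * ‖θ‖ ^ 2) / (2 * (1 - l)) = -(c * (l / (1 - l))) := by
      rw [hc]; field_simp
    simp only [smul_eq_mul, habs, hE]
    simp only [Real.rpow_def_of_pos hbase, Real.rpow_def_of_pos hη,
      Real.rpow_def_of_pos h0l, Real.rpow_def_of_pos h1l,
      Real.rpow_def_of_pos h2π, Real.rpow_def_of_pos hql, ← Real.exp_add,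
      Real.exp_eq_exp]
    rw [Real.log_div (by positivity) (by positivity),
      Real.log_mul hη.ne' h0l.ne', Real.log_mul h2π.ne' h1l.ne',
      Real.log_div h0l.ne' h1l.ne']
    ring
  rw [setIntegral_congr_fun measurableSet_Ioo hpoint]
  rw [MeasureTheory.integral_const_mul, ← hkey,
    Real.integral_rpow_mul_exp_neg_mul_Ioi (by positivity) hcpos]
  have hmain : η ^ (b/2 + a) * (1/c) ^ (b/2) = 2 ^ (b/2) * η ^ a * ‖θ‖ ^ (-b) := by
    have h1c : (0:ℝ) < 1/c := by positivity
    have hlc : Real.log (1/c) = Real.log 2 - (Real.log η + 2 * Real.log ‖θ‖) := by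
      rw [one_div, Real.log_inv, hc, Real.log_div (by positivity) two_ne_zero,
        Real.log_mul hη.ne' (by positivity), Real.log_pow]
      push_cast; ring
    simp only [Real.rpow_def_of_pos hη, Real.rpow_def_of_pos h1c,
      Real.rpow_def_of_pos (two_pos : (0:ℝ) < 2), Real.rpow_def_of_pos hn,
      ← Real.exp_add, Real.exp_eq_exp, hlc]
    ring
  linear_combination ((2*π) ^ (-(p:ℝ)/2) * Real.Gamma (b/2)) * hmain
end
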